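/- arXiv:1708.05859 — 3 statements merged into one kernel-verified Lean document; each statement's English description precedes it below -/
import Mathlib

section
/- Let f : C_n → ℝ, set D = D(f), L₁ = max{1, Lip(f)}, and L₂ = max{1, max_{x≠y∈C_n} ‖∇f(x) − ∇f(y)‖₁ / ‖x−y‖₁}, and let ν be the Gibbs distribution with Hamiltonian f. Let ε > 0 and let θ ∈ ℝ^n satisfy ‖θ‖₂ ≤ ε√n, ‖θ‖_∞ ≤ 1/4, and Tr(H(τ_θν)) ≤ 256 n^{1/3} D^{2/3} / ε^{2/3}. Let ξ_θ be the unique product measure on C_n whose center of mass lies at ∫_{C_n} tanh(∇f_{τ_θν}(y)) dτ_θν(y), and let Y ∼ ξ_θ. Then ‖tanh(∇f(E Y)) − E Y‖₁ ≤ 41 L₁ (112 L₂ n^{2/3} D^{1/3} / ε^{1/3} + ε n), where ∇f(E Y) is computed via the multilinear extension of ∇f and tanh is applied entrywise. -/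
open MeasureTheory

noncomputable section

namespace Paper

/-- The Boolean hypercube `{-1,1}^n` as a finite set of vectors in `ℝ^n`. -/
def cube (n : ℕ) : Finset (Fin n → ℝ) := Fintype.piFinset fun _ => ({-1, 1} : Finset ℝ)

/-- The ℓ¹ norm of a vector. -/
def onorm {n : ℕ} (v : Fin n → ℝ) : ℝ := ∑ i, |v i|

/-- The Euclidean (ℓ²) norm of a vector. -/
def tnorm {n : ℕ} (v : Fin n → ℝ) : ℝ := Real.sqrt (∑ i, (v i) ^ 2)

/-- Discrete derivative of `f` at coordinate `i`. -/
def dd {n : ℕ} (f : (Fin n → ℝ) → ℝ) (i : Fin n) (y : Fin n → ℝ) : ℝ :=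
  (f (Function.update y i 1) - f (Function.update y i (-1))) / 2

/-- Discrete gradient of `f`. -/
def dgrad {n : ℕ} (f : (Fin n → ℝ) → ℝ) (y : Fin n → ℝ) : Fin n → ℝ := fun i => dd f i y

/-- The multilinear (harmonic) extension of `f : C_n → ℝ` to `[-1,1]^n`. -/
def mlext {n : ℕ} (f : (Fin n → ℝ) → ℝ) (x : Fin n → ℝ) : ℝ :=
  ∑ S : Finset (Fin n),
    (((2 : ℝ) ^ n)⁻¹ * ∑ y ∈ cube n, f y * ∏ i ∈ S, y i) * ∏ i ∈ S, x i

/-- The multilinear extension of the discrete gradient of `f`. -/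
def mlgrad {n : ℕ} (f : (Fin n → ℝ) → ℝ) (x : Fin n → ℝ) : Fin n → ℝ :=
  fun i => mlext (dd f i) x

/-- The Lipschitz constant `Lip(f) = max_{i,y∈C_n} |∂_i f(y)|`. -/
def lip {n : ℕ} (f : (Fin n → ℝ) → ℝ) : ℝ :=
  sSup {a | ∃ i : Fin n, ∃ y ∈ cube n, a = |dd f i y|}

/-- The Lipschitz constant of the discrete gradient:
`max_{x ≠ y ∈ C_n} ‖∇f(x) - ∇f(y)‖₁ / ‖x - y‖₁`. -/
def gradLip {n : ℕ} (f : (Fin n → ℝ) → ℝ) : ℝ :=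
  sSup {a | ∃ x ∈ cube n, ∃ y ∈ cube n, x ≠ y ∧
    a = onorm (dgrad f x - dgrad f y) / onorm (x - y)}

/-- Gaussian width of a set `K ⊆ ℝ^n`. -/
def gaussianWidth {n : ℕ} (K : Set (Fin n → ℝ)) : ℝ :=
  ∫ θ, sSup ((fun v => ∑ i, v i * θ i) '' K)
    ∂(Measure.pi fun _ : Fin n => ProbabilityTheory.gaussianReal 0 1)

/-- Gradient complexity `D(f) = GW({∇f(y) : y ∈ C_n} ∪ {0})`. -/
def gradComplexity {n : ℕ} (f : (Fin n → ℝ) → ℝ) : ℝ :=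
  gaussianWidth ((dgrad f '' (cube n : Set (Fin n → ℝ))) ∪ {0})

/-- The Gibbs distribution with Hamiltonian `f`, as a weight function on `ℝ^n`
supported on the cube. -/
def gibbs {n : ℕ} (f : (Fin n → ℝ) → ℝ) (y : Fin n → ℝ) : ℝ :=
  if y ∈ cube n then Real.exp (f y) / ∑ z ∈ cube n, Real.exp (f z) else 0

/-- The tilt `τ_θ p` of a weight function `p` on the cube. -/
def tilt {n : ℕ} (p : (Fin n → ℝ) → ℝ) (θ : Fin n → ℝ) (y : Fin n → ℝ) : ℝ :=
  p y * Real.exp (∑ i, θ i * y i) / ∑ z ∈ cube n, p z * Real.exp (∑ i, θ i * z i)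

/-- The mean (center of mass) of the tilted measure `τ_θ p`. -/
def tiltMean {n : ℕ} (p : (Fin n → ℝ) → ℝ) (θ : Fin n → ℝ) : Fin n → ℝ :=
  fun i => ∑ y ∈ cube n, tilt p θ y * y i

/-- A weight function on the cube is a product measure: the coordinates are
independent Bernoulli-type variables. -/
def IsProduct {n : ℕ} (ξ : (Fin n → ℝ) → ℝ) : Prop :=
  (∀ y, y ∉ cube n → ξ y = 0) ∧
  ∃ q : Fin n → ℝ, (∀ i, q i ∈ Set.Icc (0 : ℝ) 1) ∧
    ∀ y ∈ cube n, ξ y = ∏ i, (if y i = 1 then q i else 1 - q i)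

/-- The Wasserstein (transportation) distance between two weight functions on the cube. -/
def W1 {n : ℕ} (p q : (Fin n → ℝ) → ℝ) : ℝ :=
  sInf {w | ∃ π : (Fin n → ℝ) × (Fin n → ℝ) → ℝ,
    (∀ a, 0 ≤ π a) ∧
    (∀ x, ∑ y ∈ cube n, π (x, y) = p x) ∧
    (∀ y, ∑ x ∈ cube n, π (x, y) = q y) ∧
    w = (1 / 2) * ∑ x ∈ cube n, ∑ y ∈ cube n, π (x, y) * onorm (x - y)}

/-- `p` (the law of a random vector on the cube) is a `(ρ,δ,ε)`-tilt-mixture. -/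
def IsTiltMixture {n : ℕ} (p : (Fin n → ℝ) → ℝ) (ρ : Measure (Fin n → ℝ))
    (δ ε : ℝ) : Prop :=
  ∃ m : Measure (Fin n → ℝ), IsProbabilityMeasure m ∧
    m {θ | ¬ (tnorm θ ≤ ε * Real.sqrt n ∧ ∀ i, |θ i| ≤ 1 / 4)} = 0 ∧
    (∀ φ : (Fin n → ℝ) → ℝ,
      ∑ y ∈ cube n, φ y * p y = ∫ θ, ∑ y ∈ cube n, φ y * tilt p θ y ∂m) ∧
    ENNReal.ofReal (1 - δ) <
      m {θ | ∃ ξ, IsProduct ξ ∧ W1 (tilt p θ) ξ ≤ δ * n} ∧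
    ρ = m.map (tiltMean p)

/-- The product weight on the cube with mean vector `z ∈ [-1,1]^n`:
the law of `X(z)`. -/
def prodW {n : ℕ} (z : Fin n → ℝ) (y : Fin n → ℝ) : ℝ := ∏ i, (1 + y i * z i) / 2

/-- `q` (the law of a random vector `X` on the cube) is a `(ρ,δ)`-mixture:
there is a coupling of `X(ρ)` and `X` with `E‖X(ρ) - X‖₁ ≤ δ n`. -/
def IsMixture {n : ℕ} (q : (Fin n → ℝ) → ℝ) (ρ : Measure (Fin n → ℝ)) (δ : ℝ) : Prop :=
  ∃ π : (Fin n → ℝ) × (Fin n → ℝ) → ℝ,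
    (∀ a, 0 ≤ π a) ∧
    (∀ x ∈ cube n, ∑ y ∈ cube n, π (x, y) = ∫ z, prodW z x ∂ρ) ∧
    (∀ y, ∑ x ∈ cube n, π (x, y) = q y) ∧
    ∑ x ∈ cube n, ∑ y ∈ cube n, π (x, y) * onorm (x - y) ≤ δ * n

/-- `f_ν = log(dν/dμ)` for a weight function `p` on the cube (`μ` uniform). -/
def hamOf {n : ℕ} (p : (Fin n → ℝ) → ℝ) : (Fin n → ℝ) → ℝ :=
  fun y => Real.log ((2 : ℝ) ^ n * p y)

/-- `Tr(H(ν))` for a weight function `p` on the cube. -/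
def traceH {n : ℕ} (p : (Fin n → ℝ) → ℝ) : ℝ :=
  ∑ i, ((∑ y ∈ cube n, p y * (Real.tanh (dd (hamOf p) i y)) ^ 2) -
    (∑ y ∈ cube n, p y * Real.tanh (dd (hamOf p) i y)) ^ 2)

set_option maxHeartbeats 1000000
open Real

lemma tanh_hasDerivAt (x : ℝ) : HasDerivAt Real.tanh (1 - Real.tanh x ^ 2) x := by
  have h : HasDerivAt (fun y => Real.sinh y / Real.cosh y)
      ((Real.cosh x * Real.cosh x - Real.sinh x * Real.sinh x) / (Real.cosh x)^2) x :=
    (Real.hasDerivAt_sinh x).div (Real.hasDerivAt_cosh x) (ne_of_gt (Real.cosh_pos x))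
  have hfun : (fun y => Real.sinh y / Real.cosh y) = Real.tanh := by
    funext y; exact (Real.tanh_eq_sinh_div_cosh y).symm
  rw [hfun] at h
  have e : (Real.cosh x * Real.cosh x - Real.sinh x * Real.sinh x) / (Real.cosh x)^2
      = 1 - Real.tanh x ^ 2 := by
    rw [Real.tanh_eq_sinh_div_cosh]
    have hc := (Real.cosh_pos x).ne'
    field_simp
  rwa [e] at h

lemma continuous_tanh : Continuous Real.tanh := by
  have hfun : (fun y => Real.sinh y / Real.cosh y) = Real.tanh := by
    funext y; exact (Real.tanh_eq_sinh_div_cosh y).symm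
  rw [← hfun]
  exact Real.continuous_sinh.div Real.continuous_cosh (fun x => (Real.cosh_pos x).ne')

lemma tanh_abs_lt_one (x : ℝ) : |Real.tanh x| < 1 := by
  rw [Real.tanh_eq_sinh_div_cosh, abs_div, abs_of_pos (Real.cosh_pos x),
    div_lt_one (Real.cosh_pos x)]
  have h := Real.cosh_sq_sub_sinh_sq x
  have h1 : Real.sinh x ^ 2 < Real.cosh x ^ 2 := by nlinarith [Real.cosh_pos x]
  have := abs_nonneg (Real.sinh x)
  nlinarith [sq_abs (Real.sinh x), abs_of_pos (Real.cosh_pos x), Real.cosh_pos x]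

/-- mean value: tanh v - tanh u = (v-u) * (1 - tanh c ^2) for some c in [u,v]. -/
lemma tanh_slope {u v : ℝ} (h : u ≤ v) :
    ∃ c, u ≤ c ∧ c ≤ v ∧ Real.tanh v - Real.tanh u = (v - u) * (1 - Real.tanh c ^ 2) := by
  rcases eq_or_lt_of_le h with rfl | hlt
  · exact ⟨u, le_refl _, le_refl _, by ring⟩
  · obtain ⟨c, hc, hd⟩ := exists_deriv_eq_slope Real.tanh hlt
      continuous_tanh.continuousOn
      (fun x _ => (tanh_hasDerivAt x).differentiableAt.differentiableWithinAt)
    refine ⟨c, hc.1.le, hc.2.le, ?_⟩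
    rw [(tanh_hasDerivAt c).deriv] at hd
    rw [eq_div_iff (sub_ne_zero.mpr hlt.ne')] at hd
    rw [← hd]; ring

lemma tanh_strictMono : StrictMono Real.tanh := by
  intro a b hab
  obtain ⟨c, _, _, he⟩ := tanh_slope hab.le
  have h1 : (0:ℝ) < 1 - Real.tanh c ^ 2 := by
    have := tanh_abs_lt_one c
    nlinarith [sq_abs (Real.tanh c), abs_nonneg (Real.tanh c)]
  nlinarith

lemma tanh_mono : Monotone Real.tanh := tanh_strictMono.monotone

lemma tanh_lipschitz {u v : ℝ} (h : u ≤ v) : Real.tanh v - Real.tanh u ≤ v - u := by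
  obtain ⟨c, _, _, he⟩ := tanh_slope h
  have h1 : Real.tanh c ^ 2 ≥ 0 := sq_nonneg _
  nlinarith [sub_nonneg.mpr h]

lemma abs_tanh_sub_le (u v : ℝ) : |Real.tanh u - Real.tanh v| ≤ |u - v| := by
  rcases le_total v u with h | h
  · rw [abs_of_nonneg (by nlinarith [tanh_mono h]), abs_of_nonneg (by linarith)]
    exact tanh_lipschitz h
  · rw [abs_of_nonpos (by nlinarith [tanh_mono h]), abs_of_nonpos (by linarith)]
    linarith [tanh_lipschitz h]

lemma abs_tanh_le_abs_tanh {u v : ℝ} (h : |u| ≤ |v|) : |Real.tanh u| ≤ |Real.tanh v| := by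
  have h0 : ∀ w : ℝ, 0 ≤ w → |Real.tanh w| = Real.tanh w := by
    intro w hw
    have : Real.tanh 0 ≤ Real.tanh w := tanh_mono hw
    rw [Real.tanh_zero] at this
    exact abs_of_nonneg this
  have habs : ∀ w : ℝ, |Real.tanh w| = Real.tanh |w| := by
    intro w
    rcases le_total 0 w with hw | hw
    · rw [abs_of_nonneg hw, h0 w hw]
    · have hw' : Real.tanh w ≤ 0 := by
        have := tanh_mono hw; rwa [Real.tanh_zero] at this
      rw [abs_of_nonpos hw, Real.tanh_neg, abs_of_nonpos hw']
  rw [habs u, habs v]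
  exact tanh_mono h

/-- Lower slope bound on an interval, in terms of the max of |tanh| at endpoints. -/
lemma tanh_sub_ge {u v : ℝ} (h : u ≤ v) :
    (v - u) * (1 - max |Real.tanh u| |Real.tanh v| ^ 2) ≤ Real.tanh v - Real.tanh u := by
  obtain ⟨c, hc1, hc2, he⟩ := tanh_slope h
  have hcb : |Real.tanh c| ≤ max |Real.tanh u| |Real.tanh v| := by
    rcases le_total 0 c with hc | hc
    · have : |c| ≤ |v| := by
        rw [abs_of_nonneg hc, abs_of_nonneg (le_trans hc hc2)]; exact hc2
      exact le_trans (abs_tanh_le_abs_tanh this) (le_max_right _ _)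
    · have : |c| ≤ |u| := by
        rw [abs_of_nonpos hc, abs_of_nonpos (le_trans hc1 hc)]; linarith
      exact le_trans (abs_tanh_le_abs_tanh this) (le_max_left _ _)
  have h2 : Real.tanh c ^ 2 ≤ max |Real.tanh u| |Real.tanh v| ^ 2 := by
    have hnn : (0:ℝ) ≤ max |Real.tanh u| |Real.tanh v| := le_trans (abs_nonneg _) (le_max_left _ _)
    nlinarith [sq_abs (Real.tanh c), abs_nonneg (Real.tanh c)]
  nlinarith [sub_nonneg.mpr h]

/-- Upper tangent bound from the left endpoint, valid on `[0,∞)`. -/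
lemma tanh_sub_le_left {u v : ℝ} (hu : 0 ≤ u) (h : u ≤ v) :
    Real.tanh v - Real.tanh u ≤ (v - u) * (1 - Real.tanh u ^ 2) := by
  obtain ⟨c, hc1, hc2, he⟩ := tanh_slope h
  have h1 : Real.tanh u ≤ Real.tanh c := tanh_mono hc1
  have h0 : 0 ≤ Real.tanh u := by
    have := tanh_mono hu; rwa [Real.tanh_zero] at this
  have hsq : Real.tanh u ^ 2 ≤ Real.tanh c ^ 2 := by nlinarith
  calc Real.tanh v - Real.tanh u = (v - u) * (1 - Real.tanh c ^ 2) := he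
    _ ≤ (v - u) * (1 - Real.tanh u ^ 2) :=
        mul_le_mul_of_nonneg_left (by linarith) (by linarith)

lemma tanh_nonneg {x : ℝ} (hx : 0 ≤ x) : 0 ≤ Real.tanh x := by
  have := tanh_mono hx; rwa [Real.tanh_zero] at this

lemma tanh_exp_form (x : ℝ) : Real.tanh x = (Real.exp (2*x) - 1) / (Real.exp (2*x) + 1) := by
  rw [Real.tanh_eq_sinh_div_cosh, Real.sinh_eq, Real.cosh_eq]
  have h2 : Real.exp (2*x) = Real.exp x * Real.exp x := by
    rw [← Real.exp_add]; ring_nf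
  have hx := Real.exp_pos x
  have hxn := Real.exp_pos (-x)
  have hprod : Real.exp x * Real.exp (-x) = 1 := by
    rw [← Real.exp_add]; simp
  rw [h2]
  have hden : Real.exp x * Real.exp x + 1 > 0 := by positivity
  field_simp
  nlinarith [hprod]

lemma tanh_one_ge : (3:ℝ)/4 ≤ Real.tanh 1 := by
  rw [tanh_exp_form]
  have h : Real.exp (2*1) = Real.exp 1 * Real.exp 1 := by rw [← Real.exp_add]; ring_nf
  have he : (2.7182818283 : ℝ) < Real.exp 1 := Real.exp_one_gt_d9
  have hp : (0:ℝ) < Real.exp (2*1) + 1 := by positivity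
  rw [le_div_iff₀ hp, h]
  nlinarith [he, sq_nonneg (Real.exp 1 - 2.7182818283)]

lemma tanh_one_le : Real.tanh 1 ≤ (78:ℝ)/100 := by
  rw [tanh_exp_form]
  have h : Real.exp (2*1) = Real.exp 1 * Real.exp 1 := by rw [← Real.exp_add]; ring_nf
  have he : Real.exp 1 < 2.7182818286 := Real.exp_one_lt_d9
  have he0 : (0:ℝ) < Real.exp 1 := Real.exp_pos 1
  have hp : (0:ℝ) < Real.exp (2*1) + 1 := by positivity
  rw [div_le_iff₀ hp, h]
  nlinarith [he, he0, sq_nonneg (Real.exp 1 - 2.7182818286)]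

lemma tanh_threshold : (1:ℝ)/2 ≤ Real.tanh (3/5) := by
  rw [tanh_exp_form]
  have h : Real.exp (2*(3/5)) = Real.exp 1 * Real.exp (1/5) := by rw [← Real.exp_add]; ring_nf
  have he : (2.7182818283 : ℝ) < Real.exp 1 := Real.exp_one_gt_d9
  have h5 : (1:ℝ)/5 + 1 ≤ Real.exp (1/5) := Real.add_one_le_exp _
  have hp : (0:ℝ) < Real.exp (2*(3/5)) + 1 := by positivity
  rw [le_div_iff₀ hp, h]
  nlinarith [he, h5, Real.exp_pos (1/5),
    mul_lt_mul_of_pos_right he (Real.exp_pos (1/5)),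
    mul_le_mul_of_nonneg_left h5 (by norm_num : (0:ℝ) ≤ 2.7182818283)]




open Real in
lemma tanh_mean_aux {α : Type*} (s : Finset α) (q Z : α → ℝ) (B : ℝ) (hB : 0 ≤ B)
    (hq0 : ∀ y ∈ s, 0 ≤ q y) (hq1 : ∑ y ∈ s, q y = 1)
    (hZ : ∀ y ∈ s, |Z y| ≤ B)
    (htb : 0 ≤ ∑ y ∈ s, q y * Real.tanh (Z y)) :
    |Real.tanh (∑ y ∈ s, q y * Z y) - ∑ y ∈ s, q y * Real.tanh (Z y)| ≤
      (8*B+4) * ∑ y ∈ s, q y * |Real.tanh (Z y) - ∑ x ∈ s, q x * Real.tanh (Z x)| := by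
  set tb := ∑ y ∈ s, q y * Real.tanh (Z y) with htbdef
  set m := ∑ y ∈ s, q y * Z y with hmdef
  set W := ∑ y ∈ s, q y * |Real.tanh (Z y) - tb| with hWdef
  have hW0 : 0 ≤ W := Finset.sum_nonneg fun y hy => mul_nonneg (hq0 y hy) (abs_nonneg _)
  have hC0 : (0:ℝ) ≤ 8*B+4 := by linarith
  have hCW0 : 0 ≤ (8*B+4) * W := mul_nonneg hC0 hW0
  have htbB : tb ≤ Real.tanh B := by
    have h1 : ∀ y ∈ s, q y * Real.tanh (Z y) ≤ q y * Real.tanh B := fun y hy =>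
      mul_le_mul_of_nonneg_left (tanh_mono (le_trans (le_abs_self _) (hZ y hy))) (hq0 y hy)
    calc tb ≤ ∑ y ∈ s, q y * Real.tanh B := Finset.sum_le_sum h1
      _ = Real.tanh B := by rw [← Finset.sum_mul, hq1, one_mul]
  have htb1 : tb < 1 := lt_of_le_of_lt htbB (lt_of_le_of_lt (le_abs_self _) (tanh_abs_lt_one B))
  have hγ : 0 < 1 - tb^2 := by nlinarith
  obtain ⟨x, hxI, hxe⟩ : ∃ x ∈ Set.Icc (0:ℝ) B, Real.tanh x = tb := by
    have hsub := intermediate_value_Icc hB (continuous_tanh.continuousOn (s := Set.Icc 0 B))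
    have hmem : tb ∈ Set.Icc (Real.tanh 0) (Real.tanh B) := by
      rw [Real.tanh_zero]; exact ⟨htb, htbB⟩
    obtain ⟨x, hx1, hx2⟩ := hsub hmem
    exact ⟨x, hx1, hx2⟩
  have hx0 : 0 ≤ x := hxI.1
  have hxB : x ≤ B := hxI.2
  have htbsum : ∑ y ∈ s, (q y * Real.tanh (Z y) - tb * q y) = 0 := by
    rw [Finset.sum_sub_distrib, ← Finset.mul_sum, hq1, mul_one, ← htbdef, sub_self]
  -- Direction 1 : tanh m - tb ≤ (8B+4) W
  have G1 : Real.tanh m - tb ≤ (8*B+4) * W := by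
    have hpt : ∀ y ∈ s, (1-tb^2) * (Z y - x) ≤
        (Real.tanh (Z y) - tb) + (8*B+4) * |Real.tanh (Z y) - tb| := by
      intro y hy
      set T := Real.tanh (Z y) with hT
      rcases le_or_gt (Z y) x with hzx | hzx
      · have hTtb : T ≤ tb := by rw [← hxe]; exact tanh_mono hzx
        have h1 : (1-tb^2) * (Z y - x) ≤ 0 :=
          mul_nonpos_of_nonneg_of_nonpos (le_of_lt hγ) (by linarith)
        have h2 : |T - tb| = tb - T := by rw [abs_of_nonpos (by linarith)]; ring
        rw [h2]
        nlinarith [mul_nonneg hB (show (0:ℝ) ≤ tb - T by linarith)]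
      · have hTtb : tb ≤ T := by rw [← hxe]; exact tanh_mono hzx.le
        have hT1 : T < 1 := lt_of_le_of_lt (le_abs_self _) (tanh_abs_lt_one _)
        have hT0 : 0 ≤ T := le_trans htb hTtb
        have h2 : |T - tb| = T - tb := abs_of_nonneg (by linarith)
        have hZyB : Z y ≤ B := le_trans (le_abs_self _) (hZ y hy)
        have hmain : (1-tb^2) * (Z y - x) ≤ (8*B+4) * (T - tb) := by
          rcases le_or_gt (T - tb) ((1 - tb)/2) with hcase | hcase
          · have hslope : (Z y - x) * (1 - T^2) ≤ T - tb := by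
              have h3 := tanh_sub_ge hzx.le
              rw [hxe] at h3
              have hmax : max |tb| |T| = T := by
                rw [abs_of_nonneg htb, abs_of_nonneg hT0]
                exact max_eq_right hTtb
              rwa [hmax] at h3
            have e1 : 1 - tb^2 ≤ 4*(1 - T^2) := by nlinarith
            have e2 : (1-tb^2)*(Z y - x) ≤ (4*(1-T^2))*(Z y - x) :=
              mul_le_mul_of_nonneg_right e1 (by linarith)
            nlinarith [mul_nonneg hB (sub_nonneg.mpr hTtb)]
          · have e1 : 1 - tb^2 ≤ 4*(T - tb) := by nlinarith
            have e2 : (1-tb^2)*(Z y - x) ≤ (4*(T-tb))*(Z y - x) :=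
              mul_le_mul_of_nonneg_right e1 (by linarith)
            have e3 : (4*(T-tb))*(Z y - x) ≤ (4*(T-tb))*B :=
              mul_le_mul_of_nonneg_left (by linarith) (by linarith)
            nlinarith [mul_nonneg hB (sub_nonneg.mpr hTtb)]
        rw [h2]; linarith
    have hsum := Finset.sum_le_sum
      (fun y hy => mul_le_mul_of_nonneg_left (hpt y hy) (hq0 y hy))
    have eL : ∑ y ∈ s, q y * ((1-tb^2) * (Z y - x)) = (1-tb^2) * m - ((1-tb^2)*x) := by
      have e : ∀ y ∈ s, q y * ((1-tb^2) * (Z y - x))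
          = (1-tb^2) * (q y * Z y) - ((1-tb^2)*x) * q y := fun y _ => by ring
      rw [Finset.sum_congr rfl e, Finset.sum_sub_distrib, ← Finset.mul_sum, ← Finset.mul_sum,
        hq1, mul_one, ← hmdef]
    have eR : ∑ y ∈ s, q y * ((Real.tanh (Z y) - tb) + (8*B+4) * |Real.tanh (Z y) - tb|)
        = (8*B+4) * W := by
      have e : ∀ y ∈ s, q y * ((Real.tanh (Z y) - tb) + (8*B+4) * |Real.tanh (Z y) - tb|)
          = (q y * Real.tanh (Z y) - tb * q y) + (8*B+4) * (q y * |Real.tanh (Z y) - tb|) :=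
        fun y _ => by ring
      rw [Finset.sum_congr rfl e, Finset.sum_add_distrib, htbsum, zero_add, ← Finset.mul_sum,
        ← hWdef]
    rw [eL, eR] at hsum
    rcases le_or_gt m x with hmx | hmx
    · have h4 : Real.tanh m ≤ tb := by rw [← hxe]; exact tanh_mono hmx
      linarith
    · have h3 : Real.tanh m - tb ≤ (m - x) * (1 - tb^2) := by
        have h5 := tanh_sub_le_left hx0 hmx.le
        rw [hxe] at h5
        nlinarith [h5]
      nlinarith [hsum]
  -- Direction 2 : tb - tanh m ≤ (8B+4) W
  have G2 : tb - Real.tanh m ≤ (8*B+4) * W := by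
    rcases le_or_gt tb (1/2) with htbh | htbh
    · have hx35 : x ≤ 3/5 := by
        by_contra hcon
        push_neg at hcon
        have := tanh_strictMono hcon
        rw [hxe] at this
        linarith [tanh_threshold]
      have hpt : ∀ y ∈ s, x - Z y ≤ (8*B+4) * |Real.tanh (Z y) - tb| := by
        intro y hy
        set T := Real.tanh (Z y) with hTd
        rcases le_or_gt x (Z y) with hzx | hzx
        · exact le_trans (by linarith) (mul_nonneg hC0 (abs_nonneg _))
        · have hTtb : T ≤ tb := by rw [← hxe]; exact tanh_mono hzx.le
          have habs : |T - tb| = tb - T := by rw [abs_of_nonpos (by linarith)]; ring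
          rw [habs]
          rcases le_or_gt (-1) (Z y) with hz1 | hz1
          · have hZ1 : |Z y| ≤ 1 := by
              rw [abs_le]; constructor <;> linarith
            have hTle : |T| ≤ Real.tanh 1 := by
              have h1 : |Real.tanh (Z y)| ≤ |Real.tanh 1| :=
                abs_tanh_le_abs_tanh (by rwa [abs_one])
              rwa [abs_of_nonneg (tanh_nonneg (by norm_num : (0:ℝ) ≤ 1))] at h1
            have hslope : (x - Z y) * (1 - max |T| |tb| ^ 2) ≤ tb - T := by
              have h3 := tanh_sub_ge hzx.le
              rwa [hxe] at h3
            have hmaxle : max |T| |tb| ≤ 78/100 := by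
              apply max_le
              · linarith [tanh_one_le]
              · rw [abs_of_nonneg htb]; linarith
            have hmax0 : 0 ≤ max |T| |tb| := le_trans (abs_nonneg T) (le_max_left _ _)
            have h39 : (39:ℝ)/100 ≤ 1 - max |T| |tb| ^ 2 := by nlinarith
            nlinarith [mul_le_mul_of_nonneg_left h39 (le_of_lt (sub_pos.mpr hzx)),
              mul_nonneg hB (sub_nonneg.mpr hTtb), hslope]
          · have hTneg : T ≤ -(3/4) := by
              have h1 : Real.tanh (Z y) ≤ Real.tanh (-1) := tanh_mono hz1.le
              rw [show ((-1):ℝ) = -(1:ℝ) by norm_num, Real.tanh_neg] at h1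
              have := tanh_one_ge
              simp only [hTd]
              linarith
            have hZyB : -B ≤ Z y := by
              have := hZ y hy; rw [abs_le] at this; exact this.1
            nlinarith
      have hsum := Finset.sum_le_sum
        (fun y hy => mul_le_mul_of_nonneg_left (hpt y hy) (hq0 y hy))
      have eL : ∑ y ∈ s, q y * (x - Z y) = x - m := by
        have e : ∀ y ∈ s, q y * (x - Z y) = x * q y - q y * Z y := fun y _ => by ring
        rw [Finset.sum_congr rfl e, Finset.sum_sub_distrib, ← Finset.mul_sum, hq1, mul_one,
          ← hmdef]
      have eR : ∑ y ∈ s, q y * ((8*B+4) * |Real.tanh (Z y) - tb|) = (8*B+4) * W := by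
        have e : ∀ y ∈ s, q y * ((8*B+4) * |Real.tanh (Z y) - tb|)
            = (8*B+4) * (q y * |Real.tanh (Z y) - tb|) := fun y _ => by ring
        rw [Finset.sum_congr rfl e, ← Finset.mul_sum, ← hWdef]
      rw [eL, eR] at hsum
      rcases le_or_gt m x with hmx | hmx
      · have h3 : Real.tanh x - Real.tanh m ≤ x - m := tanh_lipschitz hmx
        rw [hxe] at h3
        linarith
      · have h4 : tb ≤ Real.tanh m := by rw [← hxe]; exact tanh_mono hmx.le
        linarith
    · -- large mean case: Jensen via positive part
      have hpt : ∀ y ∈ s, max (Z y) 0 - Z y ≤ (8*B+4) * |Real.tanh (Z y) - tb| := by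
        intro y hy
        rcases le_or_gt 0 (Z y) with hz | hz
        · rw [max_eq_left hz, sub_self]
          exact mul_nonneg hC0 (abs_nonneg _)
        · rw [max_eq_right hz.le]
          have h2 : -B ≤ Z y := by
            have := hZ y hy; rw [abs_le] at this; exact this.1
          have hT0 : Real.tanh (Z y) ≤ 0 := by
            have := tanh_mono hz.le; rwa [Real.tanh_zero] at this
          have habs : |Real.tanh (Z y) - tb| = tb - Real.tanh (Z y) := by
            rw [abs_of_nonpos (by linarith)]; ring
          rw [habs]
          nlinarith
      set mp := ∑ y ∈ s, q y * max (Z y) 0 with hmpd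
      have hmp0 : 0 ≤ mp := Finset.sum_nonneg fun y hy =>
        mul_nonneg (hq0 y hy) (le_max_right _ _)
      have hmmp : m ≤ mp := Finset.sum_le_sum fun y hy =>
        mul_le_mul_of_nonneg_left (le_max_left _ _) (hq0 y hy)
      have st1 : tb ≤ ∑ y ∈ s, q y * Real.tanh (max (Z y) 0) := Finset.sum_le_sum fun y hy =>
        mul_le_mul_of_nonneg_left (tanh_mono (le_max_left _ _)) (hq0 y hy)
      have st2 : ∑ y ∈ s, q y * Real.tanh (max (Z y) 0) ≤ Real.tanh mp := by
        have hpt2 : ∀ y ∈ s, Real.tanh (max (Z y) 0) ≤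
            Real.tanh mp + (max (Z y) 0 - mp) * (1 - Real.tanh mp ^ 2) := by
          intro y hy
          have hZp0 : 0 ≤ max (Z y) 0 := le_max_right _ _
          rcases le_or_gt mp (max (Z y) 0) with hc | hc
          · have := tanh_sub_le_left hmp0 hc
            linarith
          · have h3 := tanh_sub_ge hc.le
            have hmax : max |Real.tanh (max (Z y) 0)| |Real.tanh mp| = Real.tanh mp := by
              rw [abs_of_nonneg (tanh_nonneg hZp0), abs_of_nonneg (tanh_nonneg hmp0)]
              exact max_eq_right (tanh_mono hc.le)
            rw [hmax] at h3
            nlinarith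
        have hsum := Finset.sum_le_sum
          (fun y hy => mul_le_mul_of_nonneg_left (hpt2 y hy) (hq0 y hy))
        have eR : ∑ y ∈ s, q y * (Real.tanh mp + (max (Z y) 0 - mp) * (1 - Real.tanh mp ^ 2))
            = Real.tanh mp := by
          have e : ∀ y ∈ s, q y * (Real.tanh mp + (max (Z y) 0 - mp) * (1 - Real.tanh mp ^ 2))
              = Real.tanh mp * q y + (1 - Real.tanh mp ^ 2) * (q y * max (Z y) 0)
                - ((1 - Real.tanh mp ^ 2) * mp) * q y := fun y _ => by ring
          rw [Finset.sum_congr rfl e, Finset.sum_sub_distrib, Finset.sum_add_distrib,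
            ← Finset.mul_sum, ← Finset.mul_sum, ← Finset.mul_sum, hq1, mul_one, mul_one, ← hmpd]
          ring
        rw [eR] at hsum
        exact hsum
      have st3 : Real.tanh mp - Real.tanh m ≤ mp - m := tanh_lipschitz hmmp
      have st4 : mp - m ≤ (8*B+4) * W := by
        have hsum := Finset.sum_le_sum
          (fun y hy => mul_le_mul_of_nonneg_left (hpt y hy) (hq0 y hy))
        have eL : ∑ y ∈ s, q y * (max (Z y) 0 - Z y) = mp - m := by
          have e : ∀ y ∈ s, q y * (max (Z y) 0 - Z y)
              = q y * max (Z y) 0 - q y * Z y := fun y _ => by ring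
          rw [Finset.sum_congr rfl e, Finset.sum_sub_distrib, ← hmpd, ← hmdef]
        have eR : ∑ y ∈ s, q y * ((8*B+4) * |Real.tanh (Z y) - tb|) = (8*B+4) * W := by
          have e : ∀ y ∈ s, q y * ((8*B+4) * |Real.tanh (Z y) - tb|)
              = (8*B+4) * (q y * |Real.tanh (Z y) - tb|) := fun y _ => by ring
          rw [Finset.sum_congr rfl e, ← Finset.mul_sum, ← hWdef]
        rw [eL, eR] at hsum
        exact hsum
      linarith
  rw [abs_le]; constructor <;> linarith

open Real in
lemma tanh_mean_lemma {α : Type*} (s : Finset α) (q Z : α → ℝ) (B : ℝ) (hB : 0 ≤ B)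
    (hq0 : ∀ y ∈ s, 0 ≤ q y) (hq1 : ∑ y ∈ s, q y = 1)
    (hZ : ∀ y ∈ s, |Z y| ≤ B) :
    |Real.tanh (∑ y ∈ s, q y * Z y) - ∑ y ∈ s, q y * Real.tanh (Z y)| ≤
      (8*B+4) * ∑ y ∈ s, q y * |Real.tanh (Z y) - ∑ x ∈ s, q x * Real.tanh (Z x)| := by
  rcases le_or_gt 0 (∑ y ∈ s, q y * Real.tanh (Z y)) with h | h
  · exact tanh_mean_aux s q Z B hB hq0 hq1 hZ h
  · have key := tanh_mean_aux s q (fun y => -(Z y)) B hB hq0 hq1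
      (fun y hy => by rw [abs_neg]; exact hZ y hy)
      (by
        simp only [Real.tanh_neg, mul_neg, Finset.sum_neg_distrib]
        linarith)
    simp only [Real.tanh_neg, mul_neg, Finset.sum_neg_distrib] at key
    have e1 : ∀ a b : ℝ, |(-a) - (-b)| = |a - b| := by
      intro a b
      rw [show (-a) - (-b) = -(a-b) by ring, abs_neg]
    rw [e1] at key
    have e2 : ∀ y, |(-Real.tanh (Z y)) - (-(∑ x ∈ s, q x * Real.tanh (Z x)))| =
        |Real.tanh (Z y) - ∑ x ∈ s, q x * Real.tanh (Z x)| := fun y => e1 _ _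
    simp only [e2] at key
    exact key

section CubeBasics
variable {n : ℕ}

lemma mem_cube {y : Fin n → ℝ} : y ∈ cube n ↔ ∀ i, y i = -1 ∨ y i = 1 := by
  simp [cube, Fintype.mem_piFinset]

lemma cube_nonempty : (cube n).Nonempty :=
  ⟨fun _ => 1, by rw [mem_cube]; intro i; right; rfl⟩

lemma update_mem_cube {y : Fin n → ℝ} (hy : y ∈ cube n) (i : Fin n) {s : ℝ}
    (hs : s = -1 ∨ s = 1) : Function.update y i s ∈ cube n := by
  rw [mem_cube] at *
  intro k
  rcases eq_or_ne k i with rfl | hk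
  · rw [Function.update_self]; exact hs
  · rw [Function.update_of_ne hk]; exact hy k

lemma cube_abs_one {y : Fin n → ℝ} (hy : y ∈ cube n) (i : Fin n) : |y i| = 1 := by
  rw [mem_cube] at hy; rcases hy i with h | h <;> rw [h] <;> norm_num

lemma dd_update_self {G : (Fin n → ℝ) → ℝ} {j : Fin n} {z : Fin n → ℝ} {s : ℝ} :
    dd G j (Function.update z j s) = dd G j z := by
  rw [dd, dd, Function.update_idem, Function.update_idem]

end CubeBasics

section GibbsBasics
variable {n : ℕ} (f : (Fin n → ℝ) → ℝ) (θ : Fin n → ℝ)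

lemma gibbs_pos {y : Fin n → ℝ} (hy : y ∈ cube n) : 0 < gibbs f y := by
  rw [gibbs, if_pos hy]
  exact div_pos (Real.exp_pos _)
    (Finset.sum_pos (fun z _ => Real.exp_pos _) cube_nonempty)

lemma tiltden_pos : 0 < ∑ z ∈ cube n, gibbs f z * Real.exp (∑ i, θ i * z i) :=
  Finset.sum_pos (fun z hz => mul_pos (gibbs_pos f hz) (Real.exp_pos _)) cube_nonempty

lemma tilt_gibbs_pos {y : Fin n → ℝ} (hy : y ∈ cube n) : 0 < tilt (gibbs f) θ y := by
  rw [tilt]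
  exact div_pos (mul_pos (gibbs_pos f hy) (Real.exp_pos _)) (tiltden_pos f θ)

lemma tilt_gibbs_sum_one : ∑ y ∈ cube n, tilt (gibbs f) θ y = 1 := by
  simp only [tilt]
  rw [← Finset.sum_div]
  exact div_self (ne_of_gt (tiltden_pos f θ))

lemma sum_mul_update (y : Fin n → ℝ) (i : Fin n) (s : ℝ) :
    ∑ k, θ k * Function.update y i s k
      = θ i * s + ∑ k ∈ Finset.univ.erase i, θ k * y k := by
  have h : (fun k => θ k * Function.update y i s k)
      = Function.update (fun k => θ k * y k) i (θ i * s) := by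
    funext k
    rcases eq_or_ne k i with rfl | hk
    · rw [Function.update_self, Function.update_self]
    · rw [Function.update_of_ne hk, Function.update_of_ne hk]
  rw [h]
  rw [Finset.sum_update_of_mem (Finset.mem_univ i)]
  congr 1
  apply Finset.sum_congr
  · rw [Finset.sdiff_singleton_eq_erase]
  · intros; rfl

lemma ham_tilt_eq {y : Fin n → ℝ} (hy : y ∈ cube n) :
    hamOf (tilt (gibbs f) θ) y = f y + (∑ i, θ i * y i) +
      (Real.log ((2:ℝ)^n) -
        Real.log ((∑ z ∈ cube n, Real.exp (f z)) *
          (∑ z ∈ cube n, gibbs f z * Real.exp (∑ i, θ i * z i)))) := by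
  have hZf : 0 < ∑ z ∈ cube n, Real.exp (f z) :=
    Finset.sum_pos (fun z _ => Real.exp_pos _) cube_nonempty
  have hDn := tiltden_pos f θ
  have hq : tilt (gibbs f) θ y = Real.exp (f y + ∑ i, θ i * y i) /
      ((∑ z ∈ cube n, Real.exp (f z)) * (∑ z ∈ cube n, gibbs f z * Real.exp (∑ i, θ i * z i))) := by
    rw [tilt, gibbs, if_pos hy, Real.exp_add]
    field_simp
  rw [hamOf, hq]
  rw [mul_div_assoc']
  rw [Real.log_div (by positivity) (by positivity)]
  rw [Real.log_mul (by positivity) (ne_of_gt (Real.exp_pos _))]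
  rw [Real.log_exp]
  ring

lemma dd_ham_tilt {y : Fin n → ℝ} (hy : y ∈ cube n) (i : Fin n) :
    dd (hamOf (tilt (gibbs f) θ)) i y = dd f i y + θ i := by
  have h1 := ham_tilt_eq f θ (update_mem_cube hy i (Or.inr rfl))
  have h2 := ham_tilt_eq f θ (update_mem_cube hy i (Or.inl rfl))
  rw [dd, h1, h2, dd]
  rw [sum_mul_update θ y i 1, sum_mul_update θ y i (-1)]
  ring

lemma tanh_half_log {u v : ℝ} (hu : 0 < u) (hv : 0 < v) :
    Real.tanh ((Real.log u - Real.log v)/2) = (u - v)/(u + v) := by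
  rw [tanh_exp_form]
  have h2 : 2 * ((Real.log u - Real.log v)/2) = Real.log u - Real.log v := by ring
  rw [h2, Real.exp_sub, Real.exp_log hu, Real.exp_log hv]
  have huv : 0 < u + v := by linarith
  field_simp

lemma tanh_dd_ham {y : Fin n → ℝ} (hy : y ∈ cube n) (j : Fin n) :
    Real.tanh (dd (hamOf (tilt (gibbs f) θ)) j y)
      = (tilt (gibbs f) θ (Function.update y j 1) - tilt (gibbs f) θ (Function.update y j (-1)))
        / (tilt (gibbs f) θ (Function.update y j 1) + tilt (gibbs f) θ (Function.update y j (-1))) := by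
  have hu : 0 < tilt (gibbs f) θ (Function.update y j 1) :=
    tilt_gibbs_pos f θ (update_mem_cube hy j (Or.inr rfl))
  have hv : 0 < tilt (gibbs f) θ (Function.update y j (-1)) :=
    tilt_gibbs_pos f θ (update_mem_cube hy j (Or.inl rfl))
  have h2n : (0:ℝ) < (2:ℝ)^n := by positivity
  have e : dd (hamOf (tilt (gibbs f) θ)) j y =
      (Real.log ((2:ℝ)^n * tilt (gibbs f) θ (Function.update y j 1))
        - Real.log ((2:ℝ)^n * tilt (gibbs f) θ (Function.update y j (-1))))/2 := by
    rw [dd, hamOf, hamOf]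
  rw [e, tanh_half_log (by positivity) (by positivity)]
  rw [show (2:ℝ)^n * tilt (gibbs f) θ (Function.update y j 1)
      - (2:ℝ)^n * tilt (gibbs f) θ (Function.update y j (-1))
      = (2:ℝ)^n * (tilt (gibbs f) θ (Function.update y j 1)
        - tilt (gibbs f) θ (Function.update y j (-1))) by ring,
    show (2:ℝ)^n * tilt (gibbs f) θ (Function.update y j 1)
      + (2:ℝ)^n * tilt (gibbs f) θ (Function.update y j (-1))
      = (2:ℝ)^n * (tilt (gibbs f) θ (Function.update y j 1)
        + tilt (gibbs f) θ (Function.update y j (-1))) by ring]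
  rw [mul_div_mul_left _ _ (ne_of_gt h2n)]

lemma gibbs_identity (j : Fin n) (h : (Fin n → ℝ) → ℝ)
    (hinv : ∀ y ∈ cube n, h (Function.update y j (-(y j))) = h y) :
    ∑ y ∈ cube n,
      tilt (gibbs f) θ y * (y j - Real.tanh (dd (hamOf (tilt (gibbs f) θ)) j y)) * h y = 0 := by
  apply Finset.sum_involution (fun y _ => Function.update y j (-(y j)))
  · intro y hy
    have hymem : Function.update y j (-(y j)) ∈ cube n := by
      apply update_mem_cube hy j
      rw [mem_cube] at hy
      rcases hy j with h1 | h1 <;> rw [h1] <;> norm_num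
    have hdd : dd (hamOf (tilt (gibbs f) θ)) j (Function.update y j (-(y j)))
        = dd (hamOf (tilt (gibbs f) θ)) j y := dd_update_self
    have hupj : Function.update y j (-(y j)) j = -(y j) := Function.update_self _ _ _
    rw [hinv y hy, hdd, hupj]
    have hu : 0 < tilt (gibbs f) θ (Function.update y j 1) :=
      tilt_gibbs_pos f θ (update_mem_cube hy j (Or.inr rfl))
    have hv : 0 < tilt (gibbs f) θ (Function.update y j (-1)) :=
      tilt_gibbs_pos f θ (update_mem_cube hy j (Or.inl rfl))
    rw [tanh_dd_ham f θ hy j]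
    rw [mem_cube] at hy
    rcases hy j with h1 | h1
    · -- y j = -1 : y = update y j (-1), flip = update y j 1
      have ey : Function.update y j (-1) = y := by
        rw [← h1]; exact Function.update_eq_self j y
      have ey2 : Function.update y j (-(y j)) = Function.update y j 1 := by
        rw [h1]; norm_num
      have hpy : tilt (gibbs f) θ y = tilt (gibbs f) θ (Function.update y j (-1)) := by
        rw [ey]
      have huv : tilt (gibbs f) θ (Function.update y j 1)
          + tilt (gibbs f) θ (Function.update y j (-1)) ≠ 0 := by positivity
      rw [ey2, h1, hpy]
      field_simp
      ring
    · have ey : Function.update y j 1 = y := by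
        rw [← h1]; exact Function.update_eq_self j y
      have ey2 : Function.update y j (-(y j)) = Function.update y j (-1) := by
        rw [h1]
      have hpy : tilt (gibbs f) θ y = tilt (gibbs f) θ (Function.update y j 1) := by
        rw [ey]
      have huv : tilt (gibbs f) θ (Function.update y j 1)
          + tilt (gibbs f) θ (Function.update y j (-1)) ≠ 0 := by positivity
      rw [ey2, h1, hpy]
      field_simp
      ring
  · intro y hy _
    intro hcon
    have := congrFun hcon j
    rw [Function.update_self] at this
    have h1 := cube_abs_one hy j
    have : y j = 0 := by linarith [abs_nonneg (y j)]
    rw [this] at h1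
    norm_num at h1
  · intro y hy
    simp only [Function.update_idem, Function.update_self]
    rw [neg_neg]
    exact Function.update_eq_self j y
  · intro y hy
    apply update_mem_cube hy j
    rw [mem_cube] at hy
    rcases hy j with h1 | h1 <;> rw [h1] <;> norm_num

lemma gibbs_identity' (j : Fin n) (h : (Fin n → ℝ) → ℝ)
    (hinv : ∀ y ∈ cube n, h (Function.update y j (-(y j))) = h y) :
    ∑ y ∈ cube n, tilt (gibbs f) θ y * y j * h y
      = ∑ y ∈ cube n, tilt (gibbs f) θ y * Real.tanh (dd (hamOf (tilt (gibbs f) θ)) j y) * h y := by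
  have h0 := gibbs_identity f θ j h hinv
  have e : ∀ y ∈ cube n,
      tilt (gibbs f) θ y * (y j - Real.tanh (dd (hamOf (tilt (gibbs f) θ)) j y)) * h y
      = tilt (gibbs f) θ y * y j * h y
        - tilt (gibbs f) θ y * Real.tanh (dd (hamOf (tilt (gibbs f) θ)) j y) * h y :=
    fun y _ => by ring
  rw [Finset.sum_congr rfl e, Finset.sum_sub_distrib, sub_eq_zero] at h0
  exact h0

end GibbsBasics

section Multilinear
variable {n : ℕ}

lemma cube_orth {z y : Fin n → ℝ} (hz : z ∈ cube n) (hy : y ∈ cube n) :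
    ∏ k, (1 + z k * y k) = if z = y then (2:ℝ)^n else 0 := by
  rcases eq_or_ne z y with rfl | hne
  · rw [if_pos rfl]
    have e : ∀ k ∈ Finset.univ, (1 + z k * z k) = (2:ℝ) := by
      intro k _
      rw [mem_cube] at hz
      rcases hz k with h | h <;> rw [h] <;> norm_num
    rw [Finset.prod_congr rfl e, Finset.prod_const]
    simp
  · rw [if_neg hne]
    have : ∃ k, z k ≠ y k := by
      by_contra hcon
      push_neg at hcon
      exact hne (funext hcon)
    obtain ⟨k, hk⟩ := this
    apply Finset.prod_eq_zero (Finset.mem_univ k)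
    rw [mem_cube] at hz hy
    rcases hz k with h1 | h1 <;> rcases hy k with h2 | h2
    · exact absurd (h1.trans h2.symm) hk
    · rw [h1, h2]; norm_num
    · rw [h1, h2]; norm_num
    · exact absurd (h1.trans h2.symm) hk

lemma mlext_cube (F : (Fin n → ℝ) → ℝ) {y : Fin n → ℝ} (hy : y ∈ cube n) :
    mlext F y = F y := by
  rw [mlext]
  have e1 : ∀ S ∈ (Finset.univ : Finset (Finset (Fin n))),
      (((2:ℝ)^n)⁻¹ * ∑ z ∈ cube n, F z * ∏ i ∈ S, z i) * ∏ i ∈ S, y i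
      = ∑ z ∈ cube n, ((2:ℝ)^n)⁻¹ * (F z * ∏ i ∈ S, (z i * y i)) := by
    intro S _
    rw [Finset.mul_sum, Finset.sum_mul]
    apply Finset.sum_congr rfl
    intro z _
    rw [Finset.prod_mul_distrib]
    ring
  rw [Finset.sum_congr rfl e1, Finset.sum_comm]
  have e2 : ∀ z ∈ cube n,
      ∑ S : Finset (Fin n), ((2:ℝ)^n)⁻¹ * (F z * ∏ i ∈ S, (z i * y i))
      = ((2:ℝ)^n)⁻¹ * F z * ∏ k, (1 + z k * y k) := by
    intro z _
    have e3 : ∏ k, (1 + z k * y k) = ∑ S : Finset (Fin n), ∏ i ∈ S, (z i * y i) := by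
      have e4 : ∀ k ∈ Finset.univ, (1 + z k * y k) = (z k * y k + 1) := fun k _ => by ring
      rw [Finset.prod_congr rfl e4, Finset.prod_add]
      rw [← Finset.powerset_univ]
      apply Finset.sum_congr rfl
      intro S _
      rw [Finset.prod_const_one, mul_one]
    have e6 : ∀ S ∈ (Finset.univ : Finset (Finset (Fin n))),
        ((2:ℝ)^n)⁻¹ * (F z * ∏ i ∈ S, (z i * y i))
        = (((2:ℝ)^n)⁻¹ * F z) * ∏ i ∈ S, (z i * y i) := fun S _ => by ring
    rw [Finset.sum_congr rfl e6, ← Finset.mul_sum, ← e3]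
  rw [Finset.sum_congr rfl e2]
  have e5 : ∀ z ∈ cube n, ((2:ℝ)^n)⁻¹ * F z * ∏ k, (1 + z k * y k)
      = if z = y then F z else 0 := by
    intro z hz
    rw [cube_orth hz hy]
    rcases eq_or_ne z y with rfl | hne
    · rw [if_pos rfl, if_pos rfl]
      field_simp
    · rw [if_neg hne, if_neg hne, mul_zero]
  rw [Finset.sum_congr rfl e5, Finset.sum_ite_eq' (cube n) y (fun z => F z), if_pos hy]

lemma prod_update_mem {S : Finset (Fin n)} {j : Fin n} (hj : j ∈ S) (z : Fin n → ℝ) (t : ℝ) :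
    ∏ i ∈ S, (Function.update z j t) i = t * ∏ i ∈ S.erase j, z i := by
  rw [← Finset.mul_prod_erase S _ hj, Function.update_self]
  congr 1
  apply Finset.prod_congr rfl
  intro k hk
  exact Function.update_of_ne (Finset.ne_of_mem_erase hk) _ _

lemma prod_update_not_mem {S : Finset (Fin n)} {j : Fin n} (hj : j ∉ S) (z : Fin n → ℝ) (t : ℝ) :
    ∏ i ∈ S, (Function.update z j t) i = ∏ i ∈ S, z i := by
  apply Finset.prod_congr rfl
  intro k hk
  exact Function.update_of_ne ((by rintro rfl; exact hj hk)) _ _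

lemma mlext_update (F : (Fin n → ℝ) → ℝ) (z : Fin n → ℝ) (j : Fin n) (t : ℝ) :
    mlext F (Function.update z j t)
      = (1+t)/2 * mlext F (Function.update z j 1)
        + (1-t)/2 * mlext F (Function.update z j (-1)) := by
  rw [mlext, mlext, mlext, Finset.mul_sum, Finset.mul_sum, ← Finset.sum_add_distrib]
  apply Finset.sum_congr rfl
  intro S _
  by_cases hj : j ∈ S
  · rw [prod_update_mem hj, prod_update_mem hj, prod_update_mem hj]
    ring
  · rw [prod_update_not_mem hj, prod_update_not_mem hj, prod_update_not_mem hj]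
    ring

lemma mlext_update_sub (F : (Fin n → ℝ) → ℝ) (z : Fin n → ℝ) (j : Fin n) (a b : ℝ) :
    mlext F (Function.update z j a) - mlext F (Function.update z j b)
      = (a - b) * dd (mlext F) j z := by
  rw [mlext_update F z j a, mlext_update F z j b, dd]
  ring

lemma dd_mlext_update (F : (Fin n → ℝ) → ℝ) (z : Fin n → ℝ) {j k : Fin n} (hkj : k ≠ j) (t : ℝ) :
    dd (mlext F) j (Function.update z k t)
      = (1+t)/2 * dd (mlext F) j (Function.update z k 1)
        + (1-t)/2 * dd (mlext F) j (Function.update z k (-1)) := by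
  have e1 : ∀ s : ℝ, Function.update (Function.update z k t) j s
      = Function.update (Function.update z j s) k t := fun s =>
    Function.update_comm hkj t s z
  have e2 : ∀ s : ℝ, Function.update (Function.update z k 1) j s
      = Function.update (Function.update z j s) k 1 := fun s =>
    Function.update_comm hkj 1 s z
  have e3 : ∀ s : ℝ, Function.update (Function.update z k (-1)) j s
      = Function.update (Function.update z j s) k (-1) := fun s =>
    Function.update_comm hkj (-1) s z
  rw [dd, dd, dd, e1, e1, e2, e2, e3, e3]
  rw [mlext_update F (Function.update z j 1) k t, mlext_update F (Function.update z j (-1)) k t]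
  ring

end Multilinear

section LipBounds
variable {n : ℕ} (f : (Fin n → ℝ) → ℝ)

lemma abs_dd_le_lip {i : Fin n} {y : Fin n → ℝ} (hy : y ∈ cube n) : |dd f i y| ≤ lip f := by
  apply le_csSup
  · apply Set.Finite.bddAbove
    apply Set.Finite.subset (Set.Finite.image
      (fun p : (Fin n) × (Fin n → ℝ) => |dd f p.1 p.2|)
      (((Finset.univ ×ˢ cube n) : Finset ((Fin n) × (Fin n → ℝ))).finite_toSet))
    rintro a ⟨i', y', hy', rfl⟩
    exact ⟨(i', y'), by simp [Finset.mem_coe, Finset.mem_product, hy'], rfl⟩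
  · exact ⟨i, y, hy, rfl⟩

lemma lip_nonneg (hn : 0 < n) : 0 ≤ lip f := by
  obtain ⟨y, hy⟩ := cube_nonempty (n := n)
  exact le_trans (abs_nonneg _) (abs_dd_le_lip f (i := ⟨0, hn⟩) hy)

lemma ratio_le_gradLip {x y : Fin n → ℝ} (hx : x ∈ cube n) (hy : y ∈ cube n) (hne : x ≠ y) :
    onorm (dgrad f x - dgrad f y) / onorm (x - y) ≤ gradLip f := by
  apply le_csSup
  · apply Set.Finite.bddAbove
    apply Set.Finite.subset (Set.Finite.image
      (fun p : (Fin n → ℝ) × (Fin n → ℝ) => onorm (dgrad f p.1 - dgrad f p.2) / onorm (p.1 - p.2))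
      (((cube n ×ˢ cube n) : Finset ((Fin n → ℝ) × (Fin n → ℝ))).finite_toSet))
    rintro a ⟨x', hx', y', hy', hne', rfl⟩
    exact ⟨(x', y'), by simp [Finset.mem_coe, Finset.mem_product, hx', hy'], rfl⟩
  · exact ⟨x, hx, y, hy, hne, rfl⟩

lemma sum_abs_ddmlext_cube (j : Fin n) {z : Fin n → ℝ} (hz : z ∈ cube n) :
    ∑ i, |dd (mlext (dd f i)) j z| ≤ max 1 (gradLip f) := by
  have h1 : Function.update z j 1 ∈ cube n := update_mem_cube hz j (Or.inr rfl)
  have h2 : Function.update z j (-1) ∈ cube n := update_mem_cube hz j (Or.inl rfl)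
  have hne : Function.update z j 1 ≠ Function.update z j (-1) := by
    intro hcon
    have h := congrFun hcon j
    rw [Function.update_self, Function.update_self] at h
    norm_num at h
  have e1 : ∀ i, dd (mlext (dd f i)) j z
      = (dd f i (Function.update z j 1) - dd f i (Function.update z j (-1)))/2 := by
    intro i
    rw [dd, mlext_cube _ h1, mlext_cube _ h2]
  have e2 : onorm (Function.update z j 1 - Function.update z j (-1)) = 2 := by
    rw [onorm, Finset.sum_eq_single j]
    · rw [Pi.sub_apply, Function.update_self, Function.update_self]
      norm_num
    · intro k _ hk
      rw [Pi.sub_apply, Function.update_of_ne hk, Function.update_of_ne hk]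
      simp
    · intro h; exact absurd (Finset.mem_univ j) h
  have e3 : ∑ i, |dd (mlext (dd f i)) j z|
      = onorm (dgrad f (Function.update z j 1) - dgrad f (Function.update z j (-1)))
        / onorm (Function.update z j 1 - Function.update z j (-1)) := by
    rw [e2, onorm, Finset.sum_div]
    apply Finset.sum_congr rfl
    intro i _
    rw [e1 i, Pi.sub_apply, dgrad, dgrad, abs_div]
    norm_num
  rw [e3]
  exact le_trans (ratio_le_gradLip f h1 h2 hne) (le_max_right _ _)

lemma sum_abs_ddmlext_le (j : Fin n) (A : Finset (Fin n)) : j ∉ A → ∀ z : Fin n → ℝ,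
      (∀ k, |z k| ≤ 1) → (∀ k ∉ A, z k = -1 ∨ z k = 1) →
      ∑ i, |dd (mlext (dd f i)) j z| ≤ max 1 (gradLip f) := by
  induction A using Finset.induction_on with
  | empty =>
    intro _ z _ hcube
    exact sum_abs_ddmlext_cube f j
      (by rw [mem_cube]; intro k; exact hcube k (Finset.notMem_empty k))
  | @insert k₀ A hk₀A ih =>
    intro hjA z hb hcube
    have hjA' : j ∉ A := fun h => hjA (Finset.mem_insert_of_mem h)
    have hk₀j : k₀ ≠ j := fun h => hjA (h ▸ Finset.mem_insert_self k₀ A)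
    have key : ∀ (F : (Fin n → ℝ) → ℝ), dd (mlext F) j z
        = (1 + z k₀)/2 * dd (mlext F) j (Function.update z k₀ 1)
          + (1 - z k₀)/2 * dd (mlext F) j (Function.update z k₀ (-1)) := by
      intro F
      have h := dd_mlext_update F z hk₀j (z k₀)
      rwa [Function.update_eq_self] at h
    have hzk := hb k₀
    rw [abs_le] at hzk
    have hc1 : (0:ℝ) ≤ (1 + z k₀)/2 := by linarith [hzk.1]
    have hc2 : (0:ℝ) ≤ (1 - z k₀)/2 := by linarith [hzk.2]
    have ih1 := ih hjA' (Function.update z k₀ 1)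
      (fun k => by
        rcases eq_or_ne k k₀ with rfl | hk
        · rw [Function.update_self]; norm_num
        · rw [Function.update_of_ne hk]; exact hb k)
      (fun k hk => by
        rcases eq_or_ne k k₀ with rfl | hkk
        · rw [Function.update_self]; right; rfl
        · rw [Function.update_of_ne hkk]
          exact hcube k (by simp [Finset.mem_insert, hkk, hk])
        )
    have ih2 := ih hjA' (Function.update z k₀ (-1))
      (fun k => by
        rcases eq_or_ne k k₀ with rfl | hk
        · rw [Function.update_self]; norm_num
        · rw [Function.update_of_ne hk]; exact hb k)
      (fun k hk => by
        rcases eq_or_ne k k₀ with rfl | hkk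
        · rw [Function.update_self]; left; rfl
        · rw [Function.update_of_ne hkk]
          exact hcube k (by simp [Finset.mem_insert, hkk, hk])
        )
    have hptw : ∀ i ∈ (Finset.univ : Finset (Fin n)), |dd (mlext (dd f i)) j z| ≤
        (1 + z k₀)/2 * |dd (mlext (dd f i)) j (Function.update z k₀ 1)|
          + (1 - z k₀)/2 * |dd (mlext (dd f i)) j (Function.update z k₀ (-1))| := by
      intro i _
      rw [key (dd f i)]
      calc |(1 + z k₀)/2 * dd (mlext (dd f i)) j (Function.update z k₀ 1)
          + (1 - z k₀)/2 * dd (mlext (dd f i)) j (Function.update z k₀ (-1))|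
          ≤ |(1 + z k₀)/2 * dd (mlext (dd f i)) j (Function.update z k₀ 1)|
            + |(1 - z k₀)/2 * dd (mlext (dd f i)) j (Function.update z k₀ (-1))| := abs_add_le _ _
        _ = (1 + z k₀)/2 * |dd (mlext (dd f i)) j (Function.update z k₀ 1)|
            + (1 - z k₀)/2 * |dd (mlext (dd f i)) j (Function.update z k₀ (-1))| := by
            rw [abs_mul, abs_mul, abs_of_nonneg hc1, abs_of_nonneg hc2]
    have hsum := Finset.sum_le_sum hptw
    rw [Finset.sum_add_distrib, ← Finset.mul_sum, ← Finset.mul_sum] at hsum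
    have hfin : (1 + z k₀)/2 * (∑ i, |dd (mlext (dd f i)) j (Function.update z k₀ 1)|)
        + (1 - z k₀)/2 * (∑ i, |dd (mlext (dd f i)) j (Function.update z k₀ (-1))|)
        ≤ max 1 (gradLip f) := by
      have b1 := mul_le_mul_of_nonneg_left ih1 hc1
      have b2 := mul_le_mul_of_nonneg_left ih2 hc2
      nlinarith [b1, b2]
    linarith
end LipBounds

section Telescope
variable {n : ℕ}

lemma telescope (f : (Fin n → ℝ) → ℝ) (θ : Fin n → ℝ) (mb : Fin n → ℝ)
    (hmb : ∀ k, mb k = ∑ y ∈ cube n,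
      tilt (gibbs f) θ y * Real.tanh (dd (hamOf (tilt (gibbs f) θ)) k y))
    (hmb1 : ∀ k, |mb k| ≤ 1) :
    ∑ i, |mlext (dd f i) mb - ∑ y ∈ cube n, tilt (gibbs f) θ y * dd f i y|
      ≤ (max 1 (gradLip f)) * ∑ j, ∑ y ∈ cube n, tilt (gibbs f) θ y *
          |Real.tanh (dd (hamOf (tilt (gibbs f) θ)) j y) - mb j| := by
  set p := tilt (gibbs f) θ with hpdef
  set L₂ := max 1 (gradLip f) with hL₂def
  have hL₂1 : (1:ℝ) ≤ L₂ := le_max_left _ _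
  have hp0 : ∀ y ∈ cube n, 0 ≤ p y := fun y hy => le_of_lt (tilt_gibbs_pos f θ hy)
  have hp1 : ∑ y ∈ cube n, p y = 1 := tilt_gibbs_sum_one f θ
  -- interpolation points
  set w : ℕ → (Fin n → ℝ) → (Fin n → ℝ) :=
    fun J y k => if (k:ℕ) < J then mb k else y k with hwdef
  set Tt : Fin n → ℕ → ℝ :=
    fun i J => ∑ y ∈ cube n, p y * mlext (dd f i) (w J y) with hTtdef
  set Wnat : ℕ → ℝ := fun J => if h : J < n then
      (∑ y ∈ cube n, p y * |Real.tanh (dd (hamOf p) ⟨J, h⟩ y) - mb ⟨J, h⟩|) else 0 with hWnatdef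
  have hw0 : ∀ y, w 0 y = y := by
    intro y; funext k; simp [hwdef]
  have hwn : ∀ y, w n y = mb := by
    intro y; funext k; simp [hwdef, k.isLt]
  have hwbound : ∀ J y, y ∈ cube n → ∀ k, |w J y k| ≤ 1 := by
    intro J y hy k
    rw [hwdef]
    dsimp only
    split
    · exact hmb1 k
    · rw [cube_abs_one hy k]
  have hwupd : ∀ (J : ℕ) (hJ : J < n) (y : Fin n → ℝ),
      w (J+1) y = Function.update (w J y) ⟨J, hJ⟩ (mb ⟨J, hJ⟩) := by
    intro J hJ y
    funext k
    rcases eq_or_ne k ⟨J, hJ⟩ with rfl | hk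
    · rw [Function.update_self, hwdef]
      simp
    · rw [Function.update_of_ne hk, hwdef]
      have hkJ : (k:ℕ) ≠ J := fun h => hk (Fin.ext h)
      dsimp only
      by_cases hlt : (k:ℕ) < J
      · rw [if_pos hlt, if_pos (Nat.lt_succ_of_lt hlt)]
      · rw [if_neg hlt, if_neg (by omega)]
  have hwself : ∀ (J : ℕ) (hJ : J < n) (y : Fin n → ℝ),
      Function.update (w J y) ⟨J, hJ⟩ (y ⟨J, hJ⟩) = w J y := by
    intro J hJ y
    have he : y ⟨J, hJ⟩ = (w J y) ⟨J, hJ⟩ := by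
      rw [hwdef]; simp
    rw [he, Function.update_eq_self]
  have hwflip : ∀ (J : ℕ) (hJ : J < n) (y : Fin n → ℝ),
      w J (Function.update y ⟨J, hJ⟩ (-(y ⟨J, hJ⟩)))
        = Function.update (w J y) ⟨J, hJ⟩ (-(y ⟨J, hJ⟩)) := by
    intro J hJ y
    funext k
    rcases eq_or_ne k ⟨J, hJ⟩ with rfl | hk
    · rw [Function.update_self, hwdef]
      simp [Function.update_self]
    · rw [Function.update_of_ne hk, hwdef]
      dsimp only
      by_cases hlt : (k:ℕ) < J
      · rw [if_pos hlt, if_pos hlt]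
      · rw [if_neg hlt, if_neg hlt, Function.update_of_ne hk]
  -- the step difference identity
  have hTdiff : ∀ (i : Fin n) (J : ℕ) (hJ : J < n),
      Tt i (J+1) - Tt i J = ∑ y ∈ cube n, p y *
        ((mb ⟨J, hJ⟩ - Real.tanh (dd (hamOf p) ⟨J, hJ⟩ y))
          * dd (mlext (dd f i)) ⟨J, hJ⟩ (w J y)) := by
    intro i J hJ
    have e1 : Tt i (J+1) - Tt i J = ∑ y ∈ cube n, p y *
        ((mb ⟨J, hJ⟩ - y ⟨J, hJ⟩) * dd (mlext (dd f i)) ⟨J, hJ⟩ (w J y)) := by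
      rw [hTtdef]
      dsimp only
      rw [← Finset.sum_sub_distrib]
      apply Finset.sum_congr rfl
      intro y hy
      rw [← mul_sub]
      congr 1
      have e2 : mlext (dd f i) (w (J+1) y) - mlext (dd f i) (w J y)
          = mlext (dd f i) (Function.update (w J y) ⟨J, hJ⟩ (mb ⟨J, hJ⟩))
            - mlext (dd f i) (Function.update (w J y) ⟨J, hJ⟩ (y ⟨J, hJ⟩)) := by
        rw [hwupd J hJ y, hwself J hJ y]
      rw [e2, mlext_update_sub]
    rw [e1]
    have hid := gibbs_identity' f θ ⟨J, hJ⟩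
      (fun y => dd (mlext (dd f i)) ⟨J, hJ⟩ (w J y))
      (fun y hy => by
        rw [hwflip J hJ y, dd_update_self])
    have e3 : ∀ y ∈ cube n, p y *
        ((mb ⟨J, hJ⟩ - y ⟨J, hJ⟩) * dd (mlext (dd f i)) ⟨J, hJ⟩ (w J y))
        = mb ⟨J, hJ⟩ * (p y * dd (mlext (dd f i)) ⟨J, hJ⟩ (w J y))
          - p y * y ⟨J, hJ⟩ * dd (mlext (dd f i)) ⟨J, hJ⟩ (w J y) := fun y _ => by ring
    have e4 : ∀ y ∈ cube n, p y *
        ((mb ⟨J, hJ⟩ - Real.tanh (dd (hamOf p) ⟨J, hJ⟩ y))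
          * dd (mlext (dd f i)) ⟨J, hJ⟩ (w J y))
        = mb ⟨J, hJ⟩ * (p y * dd (mlext (dd f i)) ⟨J, hJ⟩ (w J y))
          - p y * Real.tanh (dd (hamOf p) ⟨J, hJ⟩ y)
            * dd (mlext (dd f i)) ⟨J, hJ⟩ (w J y) := fun y _ => by ring
    rw [Finset.sum_congr rfl e3, Finset.sum_congr rfl e4,
      Finset.sum_sub_distrib, Finset.sum_sub_distrib, hid]
  -- the per-step bound
  have hstep : ∀ (J : ℕ) (hJ : J < n),
      ∑ i, |Tt i (J+1) - Tt i J| ≤ L₂ * Wnat J := by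
    intro J hJ
    have hb1 : ∀ i, |Tt i (J+1) - Tt i J| ≤ ∑ y ∈ cube n,
        (p y * |Real.tanh (dd (hamOf p) ⟨J, hJ⟩ y) - mb ⟨J, hJ⟩|)
          * |dd (mlext (dd f i)) ⟨J, hJ⟩ (w J y)| := by
      intro i
      rw [hTdiff i J hJ]
      refine le_trans (Finset.abs_sum_le_sum_abs _ _) (Finset.sum_le_sum ?_)
      intro y hy
      rw [abs_mul, abs_mul]
      rw [abs_of_nonneg (hp0 y hy)]
      have : |mb ⟨J, hJ⟩ - Real.tanh (dd (hamOf p) ⟨J, hJ⟩ y)|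
          = |Real.tanh (dd (hamOf p) ⟨J, hJ⟩ y) - mb ⟨J, hJ⟩| := abs_sub_comm _ _
      rw [this, mul_assoc]
    calc ∑ i, |Tt i (J+1) - Tt i J|
        ≤ ∑ i, ∑ y ∈ cube n,
          (p y * |Real.tanh (dd (hamOf p) ⟨J, hJ⟩ y) - mb ⟨J, hJ⟩|)
            * |dd (mlext (dd f i)) ⟨J, hJ⟩ (w J y)| := Finset.sum_le_sum (fun i _ => hb1 i)
      _ = ∑ y ∈ cube n, (p y * |Real.tanh (dd (hamOf p) ⟨J, hJ⟩ y) - mb ⟨J, hJ⟩|)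
            * ∑ i, |dd (mlext (dd f i)) ⟨J, hJ⟩ (w J y)| := by
          rw [Finset.sum_comm]
          apply Finset.sum_congr rfl
          intro y _
          rw [Finset.mul_sum]
      _ ≤ ∑ y ∈ cube n, (p y * |Real.tanh (dd (hamOf p) ⟨J, hJ⟩ y) - mb ⟨J, hJ⟩|) * L₂ := by
          apply Finset.sum_le_sum
          intro y hy
          apply mul_le_mul_of_nonneg_left _ (mul_nonneg (hp0 y hy) (abs_nonneg _))
          apply sum_abs_ddmlext_le f ⟨J, hJ⟩ (Finset.univ.filter (fun k : Fin n => (k:ℕ) < J))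
          · simp
          · exact hwbound J y hy
          · intro k hk
            simp only [Finset.mem_filter, Finset.mem_univ, true_and, not_lt] at hk
            rw [hwdef]
            dsimp only
            rw [if_neg (by omega)]
            rw [mem_cube] at hy
            exact hy k
      _ = L₂ * Wnat J := by
          rw [← Finset.sum_mul, mul_comm, hWnatdef]
          dsimp only
          rw [dif_pos hJ]
  -- assemble
  have hT0 : ∀ i, Tt i 0 = ∑ y ∈ cube n, p y * dd f i y := by
    intro i
    rw [hTtdef]
    dsimp only
    apply Finset.sum_congr rfl
    intro y hy
    rw [hw0 y, mlext_cube _ hy]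
  have hTn : ∀ i, Tt i n = mlext (dd f i) mb := by
    intro i
    rw [hTtdef]
    dsimp only
    have e : ∀ y ∈ cube n, p y * mlext (dd f i) (w n y) = mlext (dd f i) mb * p y := by
      intro y _
      rw [hwn y]; ring
    rw [Finset.sum_congr rfl e, ← Finset.mul_sum, hp1, mul_one]
  have hfin1 : ∑ i, |mlext (dd f i) mb - ∑ y ∈ cube n, p y * dd f i y|
      ≤ ∑ J ∈ Finset.range n, L₂ * Wnat J := by
    calc ∑ i, |mlext (dd f i) mb - ∑ y ∈ cube n, p y * dd f i y|
        = ∑ i, |∑ J ∈ Finset.range n, (Tt i (J+1) - Tt i J)| := by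
          apply Finset.sum_congr rfl
          intro i _
          rw [Finset.sum_range_sub (Tt i) n, hT0 i, hTn i]
      _ ≤ ∑ i, ∑ J ∈ Finset.range n, |Tt i (J+1) - Tt i J| :=
          Finset.sum_le_sum (fun i _ => Finset.abs_sum_le_sum_abs _ _)
      _ = ∑ J ∈ Finset.range n, ∑ i, |Tt i (J+1) - Tt i J| := Finset.sum_comm
      _ ≤ ∑ J ∈ Finset.range n, L₂ * Wnat J := by
          apply Finset.sum_le_sum
          intro J hJ
          exact hstep J (Finset.mem_range.mp hJ)
  have hfin2 : ∑ J ∈ Finset.range n, L₂ * Wnat J = L₂ * ∑ j, ∑ y ∈ cube n, p y *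
      |Real.tanh (dd (hamOf p) j y) - mb j| := by
    rw [← Finset.mul_sum]
    congr 1
    rw [← Fin.sum_univ_eq_sum_range Wnat n]
    apply Finset.sum_congr rfl
    intro j _
    rw [hWnatdef]
    dsimp only
    rw [dif_pos j.isLt]
  linarith [hfin1, hfin2.symm.le]

end Telescope

section Final
variable {n : ℕ}

lemma gradComplexity_nonneg (f : (Fin n → ℝ) → ℝ) : 0 ≤ gradComplexity f := by
  rw [gradComplexity, gaussianWidth]
  apply MeasureTheory.integral_nonneg
  intro θ
  dsimp only
  apply le_csSup
  · apply Set.Finite.bddAbove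
    apply Set.Finite.image
    apply Set.Finite.union
    · exact Set.Finite.image _ (cube n).finite_toSet
    · exact Set.finite_singleton _
  · refine ⟨0, Or.inr rfl, ?_⟩
    simp

lemma sum_sq_cs {m : ℕ} (g : Fin m → ℝ) (hg : ∀ j, 0 ≤ g j) :
    ∑ j, g j ≤ Real.sqrt (m * ∑ j, (g j)^2) := by
  have h1 : (∑ j, g j)^2 ≤ (m:ℝ) * ∑ j, (g j)^2 := by
    have := Finset.sum_mul_sq_le_sq_mul_sq Finset.univ (fun _ : Fin m => (1:ℝ)) g
    simpa using this
  calc ∑ j, g j = Real.sqrt ((∑ j, g j)^2) :=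
        (Real.sqrt_sq (Finset.sum_nonneg fun j _ => hg j)).symm
    _ ≤ Real.sqrt ((m:ℝ) * ∑ j, (g j)^2) := Real.sqrt_le_sqrt h1
end Final

/-- Proposition `main_proposition` of the paper.
Let `ν` be the Gibbs distribution with Hamiltonian `f` and let `θ` be a tilt with
`‖θ‖₂ ≤ ε√n`, `‖θ‖_∞ ≤ 1/4` and small `Tr(H(τ_θν))`. If `Y ∼ ξ_θ`, the product
measure centered at `∫ tanh(∇f_{τ_θν}(y)) dτ_θν(y)`, then
`‖tanh(∇f(E Y)) - E Y‖₁ ≤ 41 L₁ (112 L₂ n^{2/3} D^{1/3} / ε^{1/3} + ε n)`. -/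
theorem main_proposition (n : ℕ) (f : (Fin n → ℝ) → ℝ)
    (D L₁ L₂ ε : ℝ)
    (hD : D = gradComplexity f)
    (hL₁ : L₁ = max 1 (lip f))
    (hL₂ : L₂ = max 1 (gradLip f))
    (hε : 0 < ε)
    (θ : Fin n → ℝ)
    (hθ2 : tnorm θ ≤ ε * Real.sqrt n)
    (hθinf : ∀ i, |θ i| ≤ 1 / 4)
    (hH : traceH (tilt (gibbs f) θ) ≤
      256 * (n : ℝ) ^ ((1 : ℝ) / 3) * D ^ ((2 : ℝ) / 3) / ε ^ ((2 : ℝ) / 3))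
    (EY : Fin n → ℝ)
    (hEY : EY = fun i => ∑ y ∈ cube n,
      tilt (gibbs f) θ y * Real.tanh (dd (hamOf (tilt (gibbs f) θ)) i y)) :
    onorm (fun i => Real.tanh (mlgrad f EY i) - EY i) ≤
      41 * L₁ * (112 * L₂ * (n : ℝ) ^ ((2 : ℝ) / 3) * D ^ ((1 : ℝ) / 3) / ε ^ ((1 : ℝ) / 3)
        + ε * n) := by
  rcases Nat.eq_zero_or_pos n with hn | hn
  · -- degenerate case n = 0
    subst hn
    have hL : onorm (fun i => Real.tanh (mlgrad f EY i) - EY i) = 0 := by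
      rw [onorm]
      simp
    rw [hL]
    rw [show ((0:ℕ):ℝ) = (0:ℝ) by norm_num, Real.zero_rpow (by norm_num : ((2:ℝ)/3) ≠ 0)]
    ring_nf
    rfl
  -- main case
  set p := tilt (gibbs f) θ with hpdef
  have hp0 : ∀ y ∈ cube n, 0 ≤ p y := fun y hy => le_of_lt (tilt_gibbs_pos f θ hy)
  have hp1 : ∑ y ∈ cube n, p y = 1 := tilt_gibbs_sum_one f θ
  have hEYi : ∀ i, EY i = ∑ y ∈ cube n, p y * Real.tanh (dd (hamOf p) i y) := by
    intro i; rw [hEY]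
  have hmb1 : ∀ k, |EY k| ≤ 1 := by
    intro k
    rw [hEYi k]
    calc |∑ y ∈ cube n, p y * Real.tanh (dd (hamOf p) k y)|
        ≤ ∑ y ∈ cube n, |p y * Real.tanh (dd (hamOf p) k y)| :=
          Finset.abs_sum_le_sum_abs _ _
      _ ≤ ∑ y ∈ cube n, p y := by
          apply Finset.sum_le_sum
          intro y hy
          rw [abs_mul, abs_of_nonneg (hp0 y hy)]
          calc p y * |Real.tanh (dd (hamOf p) k y)| ≤ p y * 1 :=
                mul_le_mul_of_nonneg_left (le_of_lt (tanh_abs_lt_one _)) (hp0 y hy)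
            _ = p y := mul_one _
      _ = 1 := hp1
  set B := lip f + 1/4 with hBdef
  have hlip0 : 0 ≤ lip f := lip_nonneg f hn
  have hB0 : (0:ℝ) ≤ B := by rw [hBdef]; linarith
  have hgB : ∀ y ∈ cube n, ∀ i, |dd (hamOf p) i y| ≤ B := by
    intro y hy i
    rw [dd_ham_tilt f θ hy i, hBdef]
    calc |dd f i y + θ i| ≤ |dd f i y| + |θ i| := abs_add_le _ _
      _ ≤ lip f + 1/4 := add_le_add (abs_dd_le_lip f hy) (hθinf i)
  -- abbreviation for the W-sums
  set W : Fin n → ℝ := fun j => ∑ y ∈ cube n, p y * |Real.tanh (dd (hamOf p) j y) - EY j|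
    with hWdef
  have hW0 : ∀ j, 0 ≤ W j := fun j => Finset.sum_nonneg fun y hy =>
    mul_nonneg (hp0 y hy) (abs_nonneg _)
  -- per-coordinate bound
  have hcoord : ∀ i, |Real.tanh (mlgrad f EY i) - EY i| ≤
      |mlext (dd f i) EY - ∑ y ∈ cube n, p y * dd f i y| + |θ i| + (8*B+4) * W i := by
    intro i
    have hLem := tanh_mean_lemma (cube n) p (fun y => dd (hamOf p) i y) B hB0 hp0 hp1
      (fun y hy => hgB y hy i)
    rw [← hEYi i] at hLem
    have hbsum : ∑ y ∈ cube n, p y * dd (hamOf p) i y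
        = (∑ y ∈ cube n, p y * dd f i y) + θ i := by
      have e : ∀ y ∈ cube n, p y * dd (hamOf p) i y = p y * dd f i y + θ i * p y :=
        fun y hy => by rw [dd_ham_tilt f θ hy i]; ring
      rw [Finset.sum_congr rfl e, Finset.sum_add_distrib, ← Finset.mul_sum, hp1, mul_one]
    have hmg : mlgrad f EY i = mlext (dd f i) EY := rfl
    calc |Real.tanh (mlgrad f EY i) - EY i|
        ≤ |Real.tanh (mlgrad f EY i) - Real.tanh (∑ y ∈ cube n, p y * dd (hamOf p) i y)|
          + |Real.tanh (∑ y ∈ cube n, p y * dd (hamOf p) i y) - EY i| := abs_sub_le _ _ _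
      _ ≤ |mlgrad f EY i - ∑ y ∈ cube n, p y * dd (hamOf p) i y| + (8*B+4) * W i := by
          apply add_le_add (abs_tanh_sub_le _ _)
          rw [hWdef]
          exact hLem
      _ ≤ (|mlext (dd f i) EY - ∑ y ∈ cube n, p y * dd f i y| + |θ i|) + (8*B+4) * W i := by
          refine add_le_add ?_ le_rfl
          rw [hmg, hbsum]
          calc |mlext (dd f i) EY - ((∑ y ∈ cube n, p y * dd f i y) + θ i)|
              = |(mlext (dd f i) EY - ∑ y ∈ cube n, p y * dd f i y) - θ i| := by ring_nf
            _ ≤ |mlext (dd f i) EY - ∑ y ∈ cube n, p y * dd f i y| + |θ i| := abs_sub _ _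
      _ = |mlext (dd f i) EY - ∑ y ∈ cube n, p y * dd f i y| + |θ i| + (8*B+4) * W i := by ring
  -- telescoping bound
  have htel := telescope f θ EY (fun k => by rw [hEY]) hmb1
  -- ℓ¹ bound on θ
  have hθ1 : ∑ i, |θ i| ≤ ε * n := by
    have h1 := sum_sq_cs (fun i => |θ i|) (fun i => abs_nonneg _)
    have h2 : ∑ i, |θ i|^2 = ∑ i, (θ i)^2 := by
      apply Finset.sum_congr rfl
      intro i _
      rw [sq_abs]
    rw [h2] at h1
    have h3 : Real.sqrt ((n:ℝ) * ∑ i, (θ i)^2) ≤ Real.sqrt ((n:ℝ) * (ε * Real.sqrt n)^2) := by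
      apply Real.sqrt_le_sqrt
      apply mul_le_mul_of_nonneg_left _ (Nat.cast_nonneg n)
      have h4 : tnorm θ ^ 2 = ∑ i, (θ i)^2 := by
        rw [tnorm, Real.sq_sqrt (Finset.sum_nonneg fun i _ => sq_nonneg _)]
      rw [← h4]
      have ht0 : 0 ≤ tnorm θ := Real.sqrt_nonneg _
      nlinarith [hθ2, mul_nonneg (le_of_lt hε) (Real.sqrt_nonneg (n:ℝ))]
    have h5 : Real.sqrt ((n:ℝ) * (ε * Real.sqrt n)^2) = ε * n := by
      rw [mul_pow, Real.sq_sqrt (Nat.cast_nonneg n)]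
      rw [show (n:ℝ) * (ε^2 * (n:ℝ)) = (ε * n)^2 by ring]
      exact Real.sqrt_sq (by positivity)
    linarith [h1, h3, h5.le]
  -- Cauchy-Schwarz: W j ≤ sqrt of variance, and total bound
  have hVeq : ∀ j, (∑ y ∈ cube n, p y * (Real.tanh (dd (hamOf p) j y))^2) - (EY j)^2
      = ∑ y ∈ cube n, p y * (Real.tanh (dd (hamOf p) j y) - EY j)^2 := by
    intro j
    have e : ∀ y ∈ cube n, p y * (Real.tanh (dd (hamOf p) j y) - EY j)^2
        = p y * (Real.tanh (dd (hamOf p) j y))^2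
          - 2 * EY j * (p y * Real.tanh (dd (hamOf p) j y)) + (EY j)^2 * p y :=
      fun y _ => by ring
    rw [Finset.sum_congr rfl e, Finset.sum_add_distrib, Finset.sum_sub_distrib,
      ← Finset.mul_sum, ← Finset.mul_sum, hp1, ← hEYi j, mul_one]
    ring
  have hWj : ∀ j, W j ≤ Real.sqrt ((∑ y ∈ cube n, p y * (Real.tanh (dd (hamOf p) j y))^2)
      - (EY j)^2) := by
    intro j
    rw [hVeq j]
    have hsq : (W j)^2 ≤ ∑ y ∈ cube n, p y * (Real.tanh (dd (hamOf p) j y) - EY j)^2 := by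
      have hcs := Finset.sum_mul_sq_le_sq_mul_sq (cube n)
        (fun y => Real.sqrt (p y))
        (fun y => Real.sqrt (p y) * |Real.tanh (dd (hamOf p) j y) - EY j|)
      have e1 : ∑ y ∈ cube n, Real.sqrt (p y) * (Real.sqrt (p y)
          * |Real.tanh (dd (hamOf p) j y) - EY j|) = W j := by
        rw [hWdef]
        apply Finset.sum_congr rfl
        intro y hy
        rw [← mul_assoc, Real.mul_self_sqrt (hp0 y hy)]
      have e2 : ∑ y ∈ cube n, (Real.sqrt (p y))^2 = 1 := by
        rw [← hp1]
        apply Finset.sum_congr rfl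
        intro y hy
        rw [Real.sq_sqrt (hp0 y hy)]
      have e3 : ∑ y ∈ cube n, (Real.sqrt (p y) * |Real.tanh (dd (hamOf p) j y) - EY j|)^2
          = ∑ y ∈ cube n, p y * (Real.tanh (dd (hamOf p) j y) - EY j)^2 := by
        apply Finset.sum_congr rfl
        intro y hy
        rw [mul_pow, Real.sq_sqrt (hp0 y hy), sq_abs]
      rw [e1, e2, e3, one_mul] at hcs
      exact hcs
    calc W j = Real.sqrt ((W j)^2) := (Real.sqrt_sq (hW0 j)).symm
      _ ≤ _ := Real.sqrt_le_sqrt hsq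
  have htrace : ∑ j, ((∑ y ∈ cube n, p y * (Real.tanh (dd (hamOf p) j y))^2) - (EY j)^2)
      = traceH p := by
    rw [traceH]
    apply Finset.sum_congr rfl
    intro j _
    rw [← hEYi j]
  have hSig : ∑ j, W j ≤ Real.sqrt ((n:ℝ) * traceH p) := by
    calc ∑ j, W j ≤ ∑ j, Real.sqrt ((∑ y ∈ cube n, p y * (Real.tanh (dd (hamOf p) j y))^2)
          - (EY j)^2) := Finset.sum_le_sum fun j _ => hWj j
      _ ≤ Real.sqrt ((n:ℝ) * ∑ j, (Real.sqrt ((∑ y ∈ cube n, p y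
            * (Real.tanh (dd (hamOf p) j y))^2) - (EY j)^2))^2) :=
          sum_sq_cs _ (fun j => Real.sqrt_nonneg _)
      _ = Real.sqrt ((n:ℝ) * traceH p) := by
          congr 1
          congr 1
          rw [← htrace]
          apply Finset.sum_congr rfl
          intro j _
          rw [Real.sq_sqrt]
          rw [hVeq j]
          exact Finset.sum_nonneg fun y hy => mul_nonneg (hp0 y hy) (sq_nonneg _)
  -- the rpow bound
  have hD0 : 0 ≤ D := by rw [hD]; exact gradComplexity_nonneg f
  have hn0 : (0:ℝ) < (n:ℝ) := by exact_mod_cast hn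
  set Q : ℝ := (n : ℝ) ^ ((2 : ℝ) / 3) * D ^ ((1 : ℝ) / 3) / ε ^ ((1 : ℝ) / 3) with hQdef
  have hQ0 : 0 ≤ Q := by
    rw [hQdef]
    have h1 : (0:ℝ) ≤ (n : ℝ) ^ ((2 : ℝ) / 3) := Real.rpow_nonneg (le_of_lt hn0) _
    have h2 : (0:ℝ) ≤ D ^ ((1 : ℝ) / 3) := Real.rpow_nonneg hD0 _
    have h3 : (0:ℝ) < ε ^ ((1 : ℝ) / 3) := Real.rpow_pos_of_pos hε _
    positivity
  have hrad : Real.sqrt ((n:ℝ) * traceH p) ≤ 16 * Q := by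
    have hsq : (n:ℝ) * traceH p ≤ (16 * Q)^2 := by
      have h1 : (16 * Q)^2 = 256 * ((n:ℝ) * (n:ℝ)^((1:ℝ)/3)) * D^((2:ℝ)/3) / ε^((2:ℝ)/3) := by
        rw [hQdef]
        rw [mul_pow, div_pow, mul_pow]
        have e1 : ((n:ℝ) ^ ((2:ℝ)/3))^2 = (n:ℝ) * (n:ℝ)^((1:ℝ)/3) := by
          rw [← Real.rpow_natCast ((n:ℝ) ^ ((2:ℝ)/3)) 2, ← Real.rpow_mul (le_of_lt hn0)]
          rw [show ((2:ℝ)/3) * ((2:ℕ):ℝ) = 1 + (1:ℝ)/3 by norm_num]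
          rw [Real.rpow_add hn0, Real.rpow_one]
        have e2 : (D ^ ((1:ℝ)/3))^2 = D^((2:ℝ)/3) := by
          rw [← Real.rpow_natCast (D ^ ((1:ℝ)/3)) 2, ← Real.rpow_mul hD0]
          norm_num
        have e3 : (ε ^ ((1:ℝ)/3))^2 = ε^((2:ℝ)/3) := by
          rw [← Real.rpow_natCast (ε ^ ((1:ℝ)/3)) 2, ← Real.rpow_mul (le_of_lt hε)]
          norm_num
        rw [e1, e2, e3]
        ring
      rw [h1]
      calc (n:ℝ) * traceH p ≤ (n:ℝ) * (256 * (n : ℝ) ^ ((1 : ℝ) / 3) * D ^ ((2 : ℝ) / 3)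
            / ε ^ ((2 : ℝ) / 3)) := mul_le_mul_of_nonneg_left hH (le_of_lt hn0)
        _ = 256 * ((n:ℝ) * (n:ℝ)^((1:ℝ)/3)) * D^((2:ℝ)/3) / ε^((2:ℝ)/3) := by ring
    calc Real.sqrt ((n:ℝ) * traceH p) ≤ Real.sqrt ((16*Q)^2) := Real.sqrt_le_sqrt hsq
      _ = 16 * Q := Real.sqrt_sq (by linarith)
  -- put everything together
  have hsum1 : onorm (fun i => Real.tanh (mlgrad f EY i) - EY i)
      ≤ (max 1 (gradLip f)) * (∑ j, W j) + ε * n + (8*B+4) * (∑ j, W j) := by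
    rw [onorm]
    calc ∑ i, |Real.tanh (mlgrad f EY i) - EY i|
        ≤ ∑ i, (|mlext (dd f i) EY - ∑ y ∈ cube n, p y * dd f i y| + |θ i| + (8*B+4) * W i) :=
          Finset.sum_le_sum fun i _ => hcoord i
      _ = (∑ i, |mlext (dd f i) EY - ∑ y ∈ cube n, p y * dd f i y|) + (∑ i, |θ i|)
          + (8*B+4) * (∑ i, W i) := by
          rw [Finset.sum_add_distrib, Finset.sum_add_distrib, ← Finset.mul_sum]
      _ ≤ (max 1 (gradLip f)) * (∑ j, W j) + ε * n + (8*B+4) * (∑ j, W j) := by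
          apply add_le_add (add_le_add htel hθ1) (le_refl _)
  -- final numeric comparison
  have hL₁1 : (1:ℝ) ≤ L₁ := by rw [hL₁]; exact le_max_left _ _
  have hL₂1 : (1:ℝ) ≤ L₂ := by rw [hL₂]; exact le_max_left _ _
  have hlipL₁ : lip f ≤ L₁ := by rw [hL₁]; exact le_max_right _ _
  have hgradL₂ : max 1 (gradLip f) = L₂ := hL₂.symm
  have hSig16 : ∑ j, W j ≤ 16 * Q := le_trans hSig hrad
  have hSig0 : 0 ≤ ∑ j, W j := Finset.sum_nonneg fun j _ => hW0 j
  have hεn0 : 0 ≤ ε * n := by positivity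
  have hB14 : 8*B+4 ≤ 14 * L₁ := by
    rw [hBdef]
    nlinarith [hlipL₁, hL₁1, hlip0]
  have hRHS : 112 * L₂ * (n : ℝ) ^ ((2 : ℝ) / 3) * D ^ ((1 : ℝ) / 3) / ε ^ ((1 : ℝ) / 3)
      = 112 * L₂ * Q := by
    rw [hQdef]; ring
  rw [hRHS] at *
  calc onorm (fun i => Real.tanh (mlgrad f EY i) - EY i)
      ≤ (max 1 (gradLip f)) * (∑ j, W j) + ε * n + (8*B+4) * (∑ j, W j) := hsum1
    _ = L₂ * (∑ j, W j) + ε * n + (8*B+4) * (∑ j, W j) := by rw [hgradL₂]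
    _ ≤ 41 * L₁ * (112 * L₂ * Q + ε * n) := by
        nlinarith [mul_le_mul_of_nonneg_left hSig16 (show (0:ℝ) ≤ L₂ by linarith),
          mul_le_mul_of_nonneg_left hSig16 (show (0:ℝ) ≤ 14*L₁ by linarith),
          mul_le_mul_of_nonneg_right hB14 hSig0,
          mul_nonneg (mul_nonneg (show (0:ℝ) ≤ L₁ - 1 by linarith)
            (show (0:ℝ) ≤ L₂ by linarith)) hQ0,
          mul_nonneg (show (0:ℝ) ≤ L₁ - 1 by linarith) hεn0,
          mul_nonneg (mul_nonneg (show (0:ℝ) ≤ L₁ by linarith)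
            (show (0:ℝ) ≤ L₂ - 1 by linarith)) hQ0,
          mul_nonneg hεn0 hQ0, hQ0, hSig0]

end Paper
end
end

section
/- Let f : C_n → ℝ with Lip(f) = L and let h : ℝ → ℝ be twice differentiable with |h''(x)| < B for all x ∈ ℝ. Then for every y ∈ C_n, ‖∇(h∘f)(y) − h'(f(y))·∇f(y)‖₁ ≤ B L² n. -/
open MeasureTheory

noncomputable section

namespace Paper

lemma taylor_upper (h h' h'' : ℝ → ℝ) (B : ℝ)
    (hd1 : ∀ x, HasDerivAt h (h' x) x) (hd2 : ∀ x, HasDerivAt h' (h'' x) x)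
    (hB : ∀ x, h'' x < B) (x a : ℝ) :
    h a - h x - h' x * (a - x) ≤ B / 2 * (a - x) ^ 2 := by
  set g : ℝ → ℝ := fun t => h t - h x - h' x * (t - x) - B / 2 * (t - x) ^ 2 with hgdef
  set g1 : ℝ → ℝ := fun t => h' t - h' x - B * (t - x) with hg1def
  have hg : ∀ t, HasDerivAt g (g1 t) t := by
    intro t
    have H := (((hd1 t).sub_const (h x)).sub
      ((hasDerivAt_id t).sub_const x |>.const_mul (h' x))).sub
      (((hasDerivAt_id t).sub_const x |>.pow 2).const_mul (B / 2))
    refine H.congr_deriv ?_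
    simp [hg1def]; ring
  have hg1 : ∀ t, HasDerivAt g1 (h'' t - B) t := by
    intro t
    have H := ((hd2 t).sub_const (h' x)).sub
      ((hasDerivAt_id t).sub_const x |>.const_mul B)
    refine H.congr_deriv ?_
    ring
  have hanti : StrictAnti g1 := by
    apply strictAnti_of_deriv_neg
    intro t
    rw [(hg1 t).deriv]
    linarith [hB t]
  have hg1x : g1 x = 0 := by simp [hg1def]
  have hgx : g x = 0 := by simp [hgdef]
  have hga : g a ≤ 0 := by
    rcases lt_trichotomy a x with hax | hax | hax
    · have hmono : StrictMonoOn g (Set.Iic x) := by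
        apply strictMonoOn_of_deriv_pos (convex_Iic x)
        · exact fun t _ => (hg t).continuousAt.continuousWithinAt
        · intro t ht
          rw [interior_Iic] at ht
          rw [(hg t).deriv]
          have := hanti ht
          rw [hg1x] at this
          linarith
      have := hmono (Set.mem_Iic.2 hax.le) (Set.mem_Iic.2 le_rfl) hax
      linarith
    · subst hax; linarith
    · have hmono : StrictAntiOn g (Set.Ici x) := by
        apply strictAntiOn_of_deriv_neg (convex_Ici x)
        · exact fun t _ => (hg t).continuousAt.continuousWithinAt
        · intro t ht
          rw [interior_Ici] at ht
          rw [(hg t).deriv]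
          have := hanti ht
          rw [hg1x] at this
          linarith
      have := hmono (Set.mem_Ici.2 le_rfl) (Set.mem_Ici.2 hax.le) hax
      linarith
  simp only [hgdef] at hga
  linarith

lemma taylor_abs (h h' h'' : ℝ → ℝ) (B : ℝ)
    (hd1 : ∀ x, HasDerivAt h (h' x) x) (hd2 : ∀ x, HasDerivAt h' (h'' x) x)
    (hB : ∀ x, |h'' x| < B) (x a : ℝ) :
    |h a - h x - h' x * (a - x)| ≤ B / 2 * (a - x) ^ 2 := by
  have h1 := taylor_upper h h' h'' B hd1 hd2
    (fun t => (le_abs_self _).trans_lt (hB t)) x a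
  have h2 := taylor_upper (fun t => -h t) (fun t => -h' t) (fun t => -h'' t) B
    (fun t => (hd1 t).neg) (fun t => (hd2 t).neg)
    (fun t => (neg_le_abs _).trans_lt (hB t)) x a
  rw [abs_le]
  constructor <;> [skip; exact h1]
  linarith

/-- Chain rule for the discrete gradient, ℓ¹ version on the cube.
If `Lip(f) = L` and `h` is twice differentiable with `|h''| < B`, then for every
`y ∈ C_n`, `‖∇(h∘f)(y) - h'(f(y))·∇f(y)‖₁ ≤ B L² n`. -/
theorem chain_rule_one_norm (n : ℕ) (f : (Fin n → ℝ) → ℝ)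
    (L : ℝ) (hL : lip f = L)
    (h h' h'' : ℝ → ℝ) (B : ℝ)
    (hd1 : ∀ x, HasDerivAt h (h' x) x)
    (hd2 : ∀ x, HasDerivAt h' (h'' x) x)
    (hB : ∀ x, |h'' x| < B)
    (y : Fin n → ℝ) (hy : y ∈ cube n) :
    onorm (fun i => dd (h ∘ f) i y - h' (f y) * dd f i y) ≤ B * L ^ 2 * n := by
  have hBpos : 0 < B := lt_of_le_of_lt (abs_nonneg _) (hB 0)
  -- Lipschitz bound
  have hfin : {a | ∃ i : Fin n, ∃ y ∈ cube n, a = |dd f i y|}.Finite := by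
    apply Set.Finite.subset (Set.finite_range
      (fun p : Fin n × {z // z ∈ cube n} => |dd f p.1 p.2.1|))
    rintro a ⟨i, z, hz, rfl⟩
    exact ⟨(i, ⟨z, hz⟩), rfl⟩
  have hLd : ∀ i, |dd f i y| ≤ L := by
    intro i
    rw [← hL]
    exact le_csSup hfin.bddAbove ⟨i, y, hy, rfl⟩
  -- coordinate values are ±1
  have hcoord : ∀ i, y i = -1 ∨ y i = 1 := by
    intro i
    have h2 := hy
    rw [cube, Fintype.mem_piFinset] at h2
    simpa using h2 i
  have key : ∀ i, |dd (h ∘ f) i y - h' (f y) * dd f i y| ≤ B * L ^ 2 := by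
    intro i
    have hdL : (dd f i y) ^ 2 ≤ L ^ 2 := by
      have := hLd i
      calc (dd f i y) ^ 2 = |dd f i y| ^ 2 := (sq_abs _).symm
        _ ≤ L ^ 2 := pow_le_pow_left₀ (abs_nonneg _) (hLd i) 2
    rcases hcoord i with h1 | h1
    · -- y i = -1 : update y i (-1) = y
      have e1 : Function.update y i (-1) = y := by
        rw [← h1]; exact Function.update_eq_self i y
      set a := f (Function.update y i 1) with ha
      have hdd : dd f i y = (a - f y) / 2 := by rw [dd, e1]
      have e2 : dd (h ∘ f) i y - h' (f y) * dd f i y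
          = (h a - h (f y) - h' (f y) * (a - f y)) / 2 := by
        rw [dd, e1, hdd, Function.comp_apply, Function.comp_apply]
        ring
      rw [e2, abs_div, abs_two]
      have := taylor_abs h h' h'' B hd1 hd2 hB (f y) a
      have e3 : a - f y = 2 * dd f i y := by rw [hdd]; ring
      calc |h a - h (f y) - h' (f y) * (a - f y)| / 2
          ≤ (B / 2 * (a - f y) ^ 2) / 2 := by linarith
        _ = B * (dd f i y) ^ 2 := by rw [e3]; ring
        _ ≤ B * L ^ 2 := by gcongr
    · -- y i = 1 : update y i 1 = y
      have e1 : Function.update y i 1 = y := by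
        rw [← h1]; exact Function.update_eq_self i y
      set a := f (Function.update y i (-1)) with ha
      have hdd : dd f i y = (f y - a) / 2 := by rw [dd, e1]
      have e2 : dd (h ∘ f) i y - h' (f y) * dd f i y
          = -(h a - h (f y) - h' (f y) * (a - f y)) / 2 := by
        rw [dd, e1, hdd, Function.comp_apply, Function.comp_apply]
        ring
      rw [e2, abs_div, abs_neg, abs_two]
      have := taylor_abs h h' h'' B hd1 hd2 hB (f y) a
      have e3 : a - f y = -(2 * dd f i y) := by rw [hdd]; ring
      calc |h a - h (f y) - h' (f y) * (a - f y)| / 2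
          ≤ (B / 2 * (a - f y) ^ 2) / 2 := by linarith
        _ = B * (dd f i y) ^ 2 := by rw [e3]; ring
        _ ≤ B * L ^ 2 := by gcongr
  calc onorm (fun i => dd (h ∘ f) i y - h' (f y) * dd f i y)
      ≤ ∑ _i : Fin n, B * L ^ 2 := Finset.sum_le_sum (fun i _ => key i)
    _ = B * L ^ 2 * n := by simp [mul_comm]
  

end Paper
end
end

section
/- Let f : C_n → ℝ with Lip(f) = L and let h : ℝ → ℝ be twice differentiable with |h''(x)| < B for all x ∈ ℝ. Then for every y ∈ C_n, ‖∇(h∘f)(y) − h'(f(y))·∇f(y)‖₂ ≤ B L² √n. -/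
open MeasureTheory

noncomputable section

-- if g 0 = 0 and g' t ≤ c t on [0,1], then g 1 ≤ c/2
lemma mono_aux (g g' : ℝ → ℝ) (c : ℝ) (hg : ∀ t, HasDerivAt g (g' t) t)
    (h0 : g 0 = 0) (hb : ∀ t ∈ Set.Icc (0:ℝ) 1, g' t ≤ c * t) : g 1 ≤ c / 2 := by
  set q : ℝ → ℝ := fun t => c * t ^ 2 / 2 - g t with hq
  have hq' : ∀ t, HasDerivAt q (c * t - g' t) t := by
    intro t
    have h1 : HasDerivAt (fun t : ℝ => c * t ^ 2 / 2) (c * t) t := by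
      have := ((hasDerivAt_pow 2 t).const_mul c).div_const 2
      simpa using this.congr_deriv (by ring)
    exact h1.sub (hg t)
  have hmono : MonotoneOn q (Set.Icc 0 1) := by
    apply monotoneOn_of_deriv_nonneg (convex_Icc 0 1)
    · exact fun t _ => ((hq' t).continuousAt).continuousWithinAt
    · exact fun t _ => ((hq' t).differentiableAt).differentiableWithinAt
    · intro t ht
      rw [interior_Icc] at ht
      rw [(hq' t).deriv]
      have := hb t ⟨le_of_lt ht.1, le_of_lt ht.2⟩
      linarith
  have := hmono (Set.mem_Icc.2 ⟨le_refl 0, zero_le_one⟩) (Set.mem_Icc.2 ⟨zero_le_one, le_refl 1⟩) zero_le_one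
  simp only [hq, h0] at this
  nlinarith [this]

lemma taylor_bound (h h' : ℝ → ℝ) (B : ℝ)
    (hd1 : ∀ x, HasDerivAt h (h' x) x)
    (hlip : ∀ x z : ℝ, |h' x - h' z| ≤ B * |x - z|)
    (w u : ℝ) :
    |h u - h w - h' w * (u - w)| ≤ B / 2 * (u - w) ^ 2 := by
  set d := u - w with hd
  set p : ℝ → ℝ := fun t => h (w + t * d) - h w - h' w * (t * d) with hp
  have hp' : ∀ t, HasDerivAt p ((h' (w + t * d) - h' w) * d) t := by
    intro t
    have h1 : HasDerivAt (fun t : ℝ => w + t * d) d t := by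
      simpa using ((hasDerivAt_id t).mul_const d).const_add w
    have h2 : HasDerivAt (fun t : ℝ => h (w + t * d)) (h' (w + t * d) * d) t :=
      (hd1 (w + t * d)).comp t h1
    have h3 : HasDerivAt (fun t : ℝ => h' w * (t * d)) (h' w * d) t := by
      simpa using ((hasDerivAt_id t).mul_const d).const_mul (h' w)
    have h4 : HasDerivAt (fun t : ℝ => h (w + t * d) - h w - h' w * (t * d))
        (h' (w + t * d) * d - h' w * d) t := (h2.sub_const (h w)).sub h3
    simpa [sub_mul] using h4
  have hbound : ∀ t ∈ Set.Icc (0:ℝ) 1, |(h' (w + t * d) - h' w) * d| ≤ (B * d ^ 2) * t := by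
    intro t ht
    rw [abs_mul]
    have h1 : |h' (w + t * d) - h' w| ≤ B * |t * d| := by
      have := hlip (w + t * d) w
      simpa using this
    calc |h' (w + t * d) - h' w| * |d| ≤ (B * |t * d|) * |d| := by
          apply mul_le_mul_of_nonneg_right h1 (abs_nonneg _)
      _ = B * d ^ 2 * t := by
          rw [abs_mul, abs_of_nonneg ht.1]
          linear_combination (B * t) * (sq_abs d)
  have hup : p 1 ≤ (B * d ^ 2) / 2 := by
    apply mono_aux p _ _ hp' (by simp [hp])
    intro t ht
    exact le_trans (le_abs_self _) (hbound t ht)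
  have hlo : -p 1 ≤ (B * d ^ 2) / 2 := by
    apply mono_aux (fun t => -p t) (fun t => -((h' (w + t * d) - h' w) * d)) _
      (fun t => (hp' t).neg) (by simp [hp])
    intro t ht
    exact le_trans (neg_le_abs _) (hbound t ht)
  have hval : p 1 = h u - h w - h' w * (u - w) := by simp [hp, hd]
  rw [← hval]
  rw [abs_le]
  constructor <;> nlinarith


namespace Paper

-- per-coordinate bound
lemma coord_bound (n : ℕ) (f : (Fin n → ℝ) → ℝ)
    (L : ℝ) (hL : lip f = L)
    (h h' : ℝ → ℝ) (B : ℝ)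
    (hd1 : ∀ x, HasDerivAt h (h' x) x)
    (hlip : ∀ x z : ℝ, |h' x - h' z| ≤ B * |x - z|) (hB0 : 0 ≤ B)
    (y : Fin n → ℝ) (hy : y ∈ cube n) (i : Fin n) :
    |dd (h ∘ f) i y - h' (f y) * dd f i y| ≤ B * L ^ 2 := by
  have hddL : |dd f i y| ≤ L := by
    rw [← hL, lip]
    have hfin : {a | ∃ i : Fin n, ∃ y ∈ cube n, a = |dd f i y|}.Finite := by
      apply Set.Finite.subset
        (Set.finite_range (fun p : Fin n × {z // z ∈ cube n} => |dd f p.1 p.2.1|))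
      rintro a ⟨j, z, hz, rfl⟩
      exact ⟨(j, ⟨z, hz⟩), rfl⟩
    exact le_csSup hfin.bddAbove ⟨i, y, hy, rfl⟩
  set a := f (Function.update y i 1) with ha
  set b := f (Function.update y i (-1)) with hb
  have hdd : dd f i y = (a - b) / 2 := rfl
  have hddh : dd (h ∘ f) i y = (h a - h b) / 2 := rfl
  have hyi : y i = 1 ∨ y i = -1 := by
    have := (Fintype.mem_piFinset).1 hy i
    simpa [or_comm] using this
  have hab : (a - b) ^ 2 ≤ 4 * L ^ 2 := by
    have h1 : (dd f i y) ^ 2 ≤ L ^ 2 := by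
      nlinarith [sq_abs (dd f i y), hddL, abs_nonneg (dd f i y)]
    rw [hdd] at h1
    nlinarith
  rcases hyi with hyi | hyi
  · have hfy : f y = a := by
      rw [ha, ← hyi, Function.update_eq_self]
    have ht := taylor_bound h h' B hd1 hlip a b
    rw [hfy, hddh, hdd]
    have heq : (h a - h b) / 2 - h' a * ((a - b) / 2)
        = -((h b - h a - h' a * (b - a)) / 2) := by ring
    rw [heq, abs_neg, abs_div, abs_of_nonneg (by norm_num : (0:ℝ) ≤ 2)]
    have : (b - a) ^ 2 = (a - b) ^ 2 := by ring
    rw [this] at ht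
    nlinarith [ht, hab, hB0]
  · have hfy : f y = b := by
      rw [hb, ← hyi, Function.update_eq_self]
    have ht := taylor_bound h h' B hd1 hlip b a
    rw [hfy, hddh, hdd]
    have heq : (h a - h b) / 2 - h' b * ((a - b) / 2)
        = (h a - h b - h' b * (a - b)) / 2 := by ring
    rw [heq, abs_div, abs_of_nonneg (by norm_num : (0:ℝ) ≤ 2)]
    nlinarith [ht]


/-- Chain rule for the discrete gradient, ℓ² version on the cube.
If `Lip(f) = L` and `h` is twice differentiable with `|h''| < B`, then for every
`y ∈ C_n`, `‖∇(h∘f)(y) - h'(f(y))·∇f(y)‖₂ ≤ B L² √n`. -/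
theorem chain_rule_two_norm (n : ℕ) (f : (Fin n → ℝ) → ℝ)
    (L : ℝ) (hL : lip f = L)
    (h h' h'' : ℝ → ℝ) (B : ℝ)
    (hd1 : ∀ x, HasDerivAt h (h' x) x)
    (hd2 : ∀ x, HasDerivAt h' (h'' x) x)
    (hB : ∀ x, |h'' x| < B)
    (y : Fin n → ℝ) (hy : y ∈ cube n) :
    tnorm (fun i => dd (h ∘ f) i y - h' (f y) * dd f i y) ≤ B * L ^ 2 * Real.sqrt n := by
  have hB0 : 0 ≤ B := le_trans (abs_nonneg _) (le_of_lt (hB 0))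
  have hlip : ∀ x z : ℝ, |h' x - h' z| ≤ B * |x - z| := by
    intro x z
    have hL : LipschitzWith B.toNNReal h' := by
      apply lipschitzWith_of_nnnorm_deriv_le (fun x => (hd2 x).differentiableAt)
      intro x
      rw [(hd2 x).deriv]
      simp only [← NNReal.coe_le_coe, coe_nnnorm, Real.norm_eq_abs,
        Real.coe_toNNReal _ hB0]
      exact le_of_lt (hB x)
    have := hL.dist_le_mul x z
    simpa [Real.dist_eq, Real.coe_toNNReal _ hB0] using this
  have hcoord := coord_bound n f L hL h h' B hd1 hlip hB0 y hy
  have hBL : 0 ≤ B * L ^ 2 := mul_nonneg hB0 (sq_nonneg L)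
  rw [tnorm]
  have hsum : ∑ i, (dd (h ∘ f) i y - h' (f y) * dd f i y) ^ 2
      ≤ ∑ _i : Fin n, (B * L ^ 2) ^ 2 := by
    apply Finset.sum_le_sum
    intro i _
    have := coord_bound n f L hL h h' B hd1 hlip hB0 y hy i
    nlinarith [sq_abs (dd (h ∘ f) i y - h' (f y) * dd f i y), this,
      abs_nonneg (dd (h ∘ f) i y - h' (f y) * dd f i y)]
  calc Real.sqrt (∑ i, (dd (h ∘ f) i y - h' (f y) * dd f i y) ^ 2)
      ≤ Real.sqrt (∑ _i : Fin n, (B * L ^ 2) ^ 2) := Real.sqrt_le_sqrt hsum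
    _ = Real.sqrt ((n : ℝ) * (B * L ^ 2) ^ 2) := by
        rw [Finset.sum_const, Finset.card_univ, Fintype.card_fin, nsmul_eq_mul]
    _ = Real.sqrt n * (B * L ^ 2) := by
        rw [Real.sqrt_mul (Nat.cast_nonneg n), Real.sqrt_sq hBL]
    _ = B * L ^ 2 * Real.sqrt n := by ring


end Paper
end
end
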